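/- arXiv:2101.11765 — 4 statements merged into one kernel-verified Lean document; each statement's English description precedes it below -/
import Mathlib

section
/- There exists a constant C_p > 0 such that for every u ∈ H̃ (i.e. every measurable u : D → ℝ with u ∈ L²(D), [u] < ∞, and u = 0 almost everywhere on Ω_I), one has ‖u‖_{L²(D)} ≤ C_p [u]. In other words, the energy seminorm [·] satisfies a Poincaré inequality on H̃ and hence defines a norm there. -/
open MeasureTheory ENNReal Set

noncomputable section

/-- Points of `ℝⁿ`. -/
abbrev Pt (n : ℕ) := EuclideanSpace ℝ (Fin n)

/-- The interaction domain `Ω_I`: points outside `Ω` that interact with points of `Ω`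
(within distance `δ ∈ (0,∞]`). -/
def interactionDomain {n : ℕ} (Ω : Set (Pt n)) (δ : ℝ≥0∞) : Set (Pt n) :=
  {y | y ∉ Ω ∧ ∃ x ∈ Ω, ENNReal.ofReal (dist x y) ≤ δ}

/-- The variable-order fractional kernel
`γ(x,y) = φ(x,y) |x-y|^(-n-2 s(x,y)) 1_{|x-y| ≤ δ}`. -/
def ker {n : ℕ} (s φ : Pt n → Pt n → ℝ) (δ : ℝ≥0∞) (x y : Pt n) : ℝ :=
  if ENNReal.ofReal (dist x y) ≤ δ then φ x y * dist x y ^ (-((n : ℝ) + 2 * s x y)) else 0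

/-- Symmetric part `γ_s` of the kernel. -/
def kerSym {n : ℕ} (s φ : Pt n → Pt n → ℝ) (δ : ℝ≥0∞) (x y : Pt n) : ℝ :=
  (ker s φ δ x y + ker s φ δ y x) / 2

/-- Antisymmetric part `γ_a` of the kernel. -/
def kerAnti {n : ℕ} (s φ : Pt n → Pt n → ℝ) (δ : ℝ≥0∞) (x y : Pt n) : ℝ :=
  (ker s φ δ x y - ker s φ δ y x) / 2

/-- The squared energy seminorm `[v]² = ∬_{D×D} (v(x)-v(y))² γ_s(x,y) dx dy`. -/
def energySq {n : ℕ} (s φ : Pt n → Pt n → ℝ) (δ : ℝ≥0∞) (D : Set (Pt n))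
    (v : Pt n → ℝ) : ℝ≥0∞ :=
  ∫⁻ x in D, ∫⁻ y in D, ENNReal.ofReal ((v x - v y) ^ 2 * kerSym s φ δ x y)

/-- The energy space `H̃`: measurable, square integrable on `D = Ω ∪ Ω_I`, finite energy,
and vanishing a.e. on `Ω_I`. -/
def tildeH {n : ℕ} (s φ : Pt n → Pt n → ℝ) (δ : ℝ≥0∞) (Ω ΩI : Set (Pt n)) :
    Set (Pt n → ℝ) :=
  {v | Measurable v ∧ MemLp v 2 (volume.restrict (Ω ∪ ΩI)) ∧
    energySq s φ δ (Ω ∪ ΩI) v < ⊤ ∧ v =ᵐ[volume.restrict ΩI] 0}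

/-- The bilinear form `A(u,v) = ∬_{D×D} γ(x,y) v(x) (u(x)-u(y)) dy dx`. -/
def biForm {n : ℕ} (s φ : Pt n → Pt n → ℝ) (δ : ℝ≥0∞) (D : Set (Pt n))
    (u v : Pt n → ℝ) : ℝ :=
  ∫ x in D, ∫ y in D, ker s φ δ x y * v x * (u x - u y)

/-- `β(r) = sup { |s(x,y) - s(y,x)| : x,y ∈ D, |x-y| ≤ r }`. -/
def betaFn {n : ℕ} (s : Pt n → Pt n → ℝ) (D : Set (Pt n)) (r : ℝ) : ℝ :=
  sSup {t | ∃ x ∈ D, ∃ y ∈ D, dist x y ≤ r ∧ t = |s x y - s y x|}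

section PoincareAuxSec
open Metric
namespace PoincareAux

variable {n : ℕ}

/-- Translation difference energy `G v t = ∫ (v x - v (x+t))²`. -/
def G (v : Pt n → ℝ) (t : Pt n) : ℝ≥0∞ :=
  ∫⁻ x, ENNReal.ofReal ((v x - v (x + t)) ^ 2)

lemma G_zero (v : Pt n → ℝ) : G v 0 = 0 := by
  simp [G]

lemma G_add (v : Pt n → ℝ) (hv : Measurable v) (a b : Pt n) :
    G v (a + b) ≤ 2 * G v a + 2 * G v b := by
  have meas1 : Measurable fun x : Pt n => (2:ℝ≥0∞) * ENNReal.ofReal ((v x - v (x + a)) ^ 2) := by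
    apply Measurable.const_mul
    exact ((hv.sub (hv.comp (measurable_add_const a))).pow measurable_const).ennreal_ofReal
  have key : ∀ x : Pt n, ENNReal.ofReal ((v x - v (x + (a + b))) ^ 2)
      ≤ 2 * ENNReal.ofReal ((v x - v (x + a)) ^ 2)
        + 2 * ENNReal.ofReal ((v (x + a) - v (x + a + b)) ^ 2) := by
    intro x
    rw [← add_assoc]
    have h1 : (v x - v (x + a + b)) ^ 2
        ≤ 2 * (v x - v (x + a)) ^ 2 + 2 * (v (x + a) - v (x + a + b)) ^ 2 := by
      nlinarith [sq_nonneg (v x - v (x + a) - (v (x + a) - v (x + a + b)))]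
    calc ENNReal.ofReal ((v x - v (x + a + b)) ^ 2)
        ≤ ENNReal.ofReal (2 * (v x - v (x + a)) ^ 2 + 2 * (v (x + a) - v (x + a + b)) ^ 2) :=
          ENNReal.ofReal_le_ofReal h1
      _ = _ := by
          rw [ENNReal.ofReal_add (by positivity) (by positivity),
            ENNReal.ofReal_mul (by norm_num), ENNReal.ofReal_mul (by norm_num)]
          norm_num
  calc G v (a + b) ≤ ∫⁻ x, (2 * ENNReal.ofReal ((v x - v (x + a)) ^ 2)
        + 2 * ENNReal.ofReal ((v (x + a) - v (x + a + b)) ^ 2)) := lintegral_mono key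
    _ = 2 * G v a + 2 * ∫⁻ x, ENNReal.ofReal ((v (x + a) - v ((x + a) + b)) ^ 2) := by
        rw [lintegral_add_left meas1, lintegral_const_mul' _ _ (by norm_num),
          lintegral_const_mul' _ _ (by norm_num)]
        rfl
    _ = 2 * G v a + 2 * G v b := by
        congr 1
        congr 1
        exact lintegral_add_right_eq_self (fun z => ENNReal.ofReal ((v z - v (z + b)) ^ 2)) a

lemma G_nsmul (v : Pt n → ℝ) (hv : Measurable v) (t : Pt n) :
    ∀ k : ℕ, G v (k • t) ≤ 4 ^ k * G v t := by
  intro k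
  induction k with
  | zero => simp [G_zero]
  | succ k ih =>
      have h1 : G v ((k + 1) • t) ≤ 2 * G v (k • t) + 2 * G v t := by
        rw [succ_nsmul]; exact G_add v hv _ _
      have h2 : (2:ℝ≥0∞) * (4 ^ k * G v t) + 2 * G v t ≤ 4 ^ (k + 1) * G v t := by
        have h3 : (2:ℝ≥0∞) * G v t ≤ 2 * (4 ^ k * G v t) := by
          rw [← mul_assoc, mul_comm (2:ℝ≥0∞) (4 ^ k : ℝ≥0∞), mul_assoc]
          exact le_mul_of_one_le_left zero_le (one_le_pow_of_one_le' (by norm_num) k)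
        calc (2:ℝ≥0∞) * (4 ^ k * G v t) + 2 * G v t
            ≤ 2 * (4 ^ k * G v t) + 2 * (4 ^ k * G v t) := by gcongr
          _ = 4 ^ (k + 1) * G v t := by ring
      calc G v ((k + 1) • t) ≤ 2 * G v (k • t) + 2 * G v t := h1
        _ ≤ 2 * (4 ^ k * G v t) + 2 * G v t := by gcongr
        _ ≤ 4 ^ (k + 1) * G v t := h2

end PoincareAux
end PoincareAuxSec

set_option maxHeartbeats 2000000 in
open PoincareAux Metric in
/-- **Poincaré inequality** for the energy seminorm: there is `C_p > 0` with
`‖u‖_{L²(D)} ≤ C_p [u]` for every `u ∈ H̃`. -/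
theorem poincare_inequality
    (n : ℕ) (hn : 1 ≤ n)
    (Ω : Set (Pt n)) (hΩo : IsOpen Ω) (hΩb : Bornology.IsBounded Ω) (hΩne : Ω.Nonempty)
    (δ : ℝ≥0∞) (hδ : 0 < δ)
    (s φ : Pt n → Pt n → ℝ)
    (hs_meas : Measurable (Function.uncurry s)) (hφ_meas : Measurable (Function.uncurry φ))
    (slo shi φlo φhi : ℝ) (hslo : 0 < slo) (hshi : shi < 1) (hφlo : 0 < φlo)
    (D : Set (Pt n)) (hD : D = Ω ∪ interactionDomain Ω δ)
    (hs_bd : ∀ x ∈ D, ∀ y ∈ D, slo ≤ s x y ∧ s x y ≤ shi)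
    (hφ_bd : ∀ x ∈ D, ∀ y ∈ D, φlo ≤ φ x y ∧ φ x y ≤ φhi)
    :
    ∃ Cp : ℝ, 0 < Cp ∧
      ∀ u ∈ tildeH s φ δ Ω (interactionDomain Ω δ),
        eLpNorm u 2 (volume.restrict D) ≤
          ENNReal.ofReal Cp * (energySq s φ δ D u) ^ (1/2 : ℝ) := by

  classical
  -- the radius r
  set r : ℝ := (min 1 δ).toReal with hr_def
  have hmin_ne_top : min 1 δ ≠ ⊤ := ne_top_of_le_ne_top one_ne_top (min_le_left _ _)
  have hmin_ne_zero : min 1 δ ≠ 0 := by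
    rw [← pos_iff_ne_zero]
    exact lt_min one_pos hδ
  have hr0 : 0 < r := ENNReal.toReal_pos hmin_ne_zero hmin_ne_top
  have hr1 : r ≤ 1 := by
    have := ENNReal.toReal_mono one_ne_top (min_le_left 1 δ)
    simpa using this
  have hrδ : ENNReal.ofReal r ≤ δ := by
    rw [hr_def, ENNReal.ofReal_toReal hmin_ne_top]
    exact min_le_right _ _
  -- bounding ball for Ω
  obtain ⟨R0, hR0⟩ := hΩb.subset_ball (0 : Pt n)
  set R : ℝ := max R0 1 with hR_def
  have hR1 : (1:ℝ) ≤ R := le_max_right _ _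
  have hRpos : 0 < R := lt_of_lt_of_le one_pos hR1
  have hΩR : Ω ⊆ ball (0 : Pt n) R := hR0.trans (ball_subset_ball (le_max_left _ _))
  -- the number of steps
  set N : ℕ := ⌈(4 * R) / r⌉₊ + 1 with hN_def
  have hNr : 4 * R ≤ (N : ℝ) * r := by
    have h1 : (4 * R) / r ≤ (N : ℝ) := by
      calc (4 * R) / r ≤ (⌈(4 * R) / r⌉₊ : ℝ) := Nat.le_ceil _
        _ ≤ (N : ℝ) := by exact_mod_cast Nat.le_succ _
    calc 4 * R = ((4 * R) / r) * r := by field_simp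
      _ ≤ (N : ℝ) * r := mul_le_mul_of_nonneg_right h1 hr0.le
  -- the annulus A
  set A : Set (Pt n) := ball (0 : Pt n) r \ closedBall 0 (r / 2) with hA_def
  have hA_open : IsOpen A := by
    rw [hA_def, diff_eq]
    exact isOpen_ball.inter isClosed_closedBall.isOpen_compl
  have hA_ne : A.Nonempty := by
    refine ⟨(3 * r / 4) • (EuclideanSpace.single (⟨0, hn⟩ : Fin n) (1:ℝ)), ?_, ?_⟩
    · rw [mem_ball, dist_zero_right, norm_smul, EuclideanSpace.norm_single]
      simp only [norm_one, mul_one, Real.norm_eq_abs]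
      rw [abs_of_nonneg (by positivity)]
      linarith
    · rw [mem_closedBall, dist_zero_right, norm_smul, EuclideanSpace.norm_single]
      simp only [norm_one, mul_one, Real.norm_eq_abs]
      rw [abs_of_nonneg (by positivity)]
      push_neg
      linarith
  have hA_meas : MeasurableSet A := hA_open.measurableSet
  have hA_pos : 0 < volume A := hA_open.measure_pos volume hA_ne
  have hA_top : volume A < ⊤ := lt_of_le_of_lt (measure_mono diff_subset) measure_ball_lt_top
  -- the constant
  set c : ℝ≥0∞ := ENNReal.ofReal φlo * (2 * volume A / 4 ^ N) with hc_def
  have h4N0 : (4:ℝ≥0∞) ^ N ≠ 0 := by positivity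
  have h4Nt : (4:ℝ≥0∞) ^ N ≠ ⊤ := ENNReal.pow_ne_top (by norm_num)
  have hc0 : c ≠ 0 := by
    rw [hc_def]
    apply mul_ne_zero
    · simp [ENNReal.ofReal_eq_zero, not_le, hφlo]
    · rw [ENNReal.div_ne_zero]
      exact ⟨by simp [pos_iff_ne_zero.mp hA_pos], h4Nt⟩
  have hc_top : c ≠ ⊤ := by
    rw [hc_def]
    apply ENNReal.mul_ne_top ENNReal.ofReal_ne_top
    exact (ENNReal.div_lt_top (by simp [ENNReal.mul_ne_top, hA_top.ne]) h4N0).ne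
  set Cp : ℝ := ((c⁻¹) ^ (1/2 : ℝ)).toReal with hCp_def
  have hcinv0 : c⁻¹ ≠ 0 := ENNReal.inv_ne_zero.mpr hc_top
  have hcinvt : c⁻¹ ≠ ⊤ := ENNReal.inv_ne_top.mpr hc0
  have hrpow_ne_top : (c⁻¹) ^ (1/2 : ℝ) ≠ ⊤ :=
    ENNReal.rpow_ne_top_of_nonneg (by norm_num) hcinvt
  have hCp_pos : 0 < Cp := by
    rw [hCp_def]
    apply ENNReal.toReal_pos _ hrpow_ne_top
    simp [ENNReal.rpow_eq_zero_iff, hcinv0, hcinvt]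
  refine ⟨Cp, hCp_pos, ?_⟩
  intro u hu
  obtain ⟨hu_meas, hu_L2, hu_fin, hu_zero⟩ := hu
  -- D is open
  have hDS : D = {y : Pt n | ∃ x ∈ Ω, ENNReal.ofReal (dist x y) ≤ δ} := by
    rw [hD]
    apply Subset.antisymm
    · rintro y (hy | ⟨hy1, hy2⟩)
      · exact ⟨y, hy, by simp⟩
      · exact hy2
    · rintro y ⟨x, hx, hxy⟩
      by_cases hyΩ : y ∈ Ω
      · exact Or.inl hyΩ
      · exact Or.inr ⟨hyΩ, x, hx, hxy⟩
  have hD_open : IsOpen D := by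
    rw [hDS, Metric.isOpen_iff]
    rintro y ⟨x, hx, hxy⟩
    obtain ⟨ε, hε, hball⟩ := Metric.isOpen_iff.mp hΩo x hx
    refine ⟨ε, hε, fun y' hy' => ?_⟩
    refine ⟨x + (y' - y), hball ?_, ?_⟩
    · rw [mem_ball]
      have h1 : dist (x + (y' - y)) x = dist y' y := by
        rw [dist_eq_norm, dist_eq_norm]
        congr 1
        abel
      rw [h1]
      exact mem_ball.mp hy'
    · have h2 : dist (x + (y' - y)) y' = dist x y := by
        rw [dist_eq_norm, dist_eq_norm]
        congr 1
        abel
      rwa [h2]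
  have hDmeas : MeasurableSet D := hD_open.measurableSet
  have hΩD : Ω ⊆ D := by rw [hD]; exact subset_union_left
  have hΩID : interactionDomain Ω δ = D \ Ω := by
    rw [hD]
    apply Subset.antisymm
    · rintro y ⟨hy1, hy2⟩
      exact ⟨Or.inr ⟨hy1, hy2⟩, hy1⟩
    · rintro y ⟨(hy | hy), hy2⟩
      · exact absurd hy hy2
      · exact hy
  have hΩImeas : MeasurableSet (interactionDomain Ω δ) := by
    rw [hΩID]; exact hDmeas.diff hΩo.measurableSet
  -- v = indicator extension
  set v : Pt n → ℝ := Ω.indicator u with hv_def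
  have hv_meas : Measurable v := hu_meas.indicator hΩo.measurableSet
  have hv_supp : ∀ x, v x ≠ 0 → x ∈ Ω := by
    intro x hx
    by_contra hxΩ
    exact hx (indicator_of_notMem hxΩ u)
  have hv_notΩ : ∀ x, x ∉ Ω → v x = 0 := fun x hx => indicator_of_notMem hx u
  have huv : u =ᵐ[volume.restrict D] v := by
    have h1 : ∀ᵐ x ∂volume.restrict Ω, u x = v x := by
      filter_upwards [ae_restrict_mem hΩo.measurableSet] with x hx
      exact (indicator_of_mem hx u).symm
    have h2 : ∀ᵐ x ∂volume.restrict (interactionDomain Ω δ), u x = v x := by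
      filter_upwards [hu_zero, ae_restrict_mem hΩImeas] with x hx1 hx2
      rw [hx1, hv_notΩ x hx2.1]
      rfl
    rw [hD]
    exact (ae_restrict_union_iff _ _ _).mpr ⟨h1, h2⟩
  -- membership lemma
  have hmemD : ∀ x ∈ Ω, ∀ y : Pt n, dist x y < r → y ∈ D := by
    intro x hx y hxy
    rw [hDS]
    exact ⟨x, hx, le_trans (ENNReal.ofReal_le_ofReal hxy.le) hrδ⟩
  -- the L² mass
  set I : ℝ≥0∞ := ∫⁻ x, ENNReal.ofReal ((v x) ^ 2) with hI_def
  have hI_meas : Measurable fun x => ENNReal.ofReal ((v x) ^ 2) :=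
    (hv_meas.pow measurable_const).ennreal_ofReal
  -- Step 0 : the L² norm of u equals I^(1/2)
  have hLp : eLpNorm u 2 (volume.restrict D) = I ^ (1/2 : ℝ) := by
    rw [eLpNorm_eq_lintegral_rpow_enorm_toReal two_ne_zero ENNReal.ofNat_ne_top]
    have h2 : ((2:ℝ≥0∞)).toReal = (2:ℝ) := by norm_num
    rw [h2]
    congr 1
    have e1 : ∫⁻ x in D, ‖u x‖ₑ ^ (2:ℝ) = ∫⁻ x in D, ENNReal.ofReal ((v x) ^ 2) := by
      apply lintegral_congr_ae
      filter_upwards [huv] with x hx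
      rw [Real.enorm_eq_ofReal_abs, ENNReal.ofReal_rpow_of_nonneg (abs_nonneg _) (by norm_num)]
      rw [hx]
      congr 1
      rw [show ((2:ℝ)) = ((2:ℕ):ℝ) by norm_num, Real.rpow_natCast, sq_abs]
    rw [e1, ← lintegral_indicator hDmeas]
    apply lintegral_congr
    intro x
    by_cases hx : x ∈ D
    · rw [indicator_of_mem hx]
    · rw [indicator_of_notMem hx, hv_notΩ x (fun h => hx (hΩD h))]
      simp
  -- Step 1 : kernel lower bound
  have key1 : ENNReal.ofReal φlo *
      ∫⁻ x in D, ∫⁻ y in D, (ball x r).indicator (fun y => ENNReal.ofReal ((u x - u y) ^ 2)) y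
      ≤ energySq s φ δ D u := by
    rw [energySq, ← lintegral_const_mul' _ _ ENNReal.ofReal_ne_top]
    apply lintegral_mono_ae
    filter_upwards [ae_restrict_mem hDmeas] with x hx
    rw [← lintegral_const_mul' _ _ ENNReal.ofReal_ne_top]
    apply lintegral_mono_ae
    filter_upwards [ae_restrict_mem hDmeas] with y hy
    by_cases hyb : y ∈ ball x r
    · rw [indicator_of_mem hyb]
      rcases eq_or_ne y x with rfl | hne
      · simp
      · have hd0 : 0 < dist x y := dist_pos.mpr (Ne.symm hne)
        have hdr : dist x y < r := by rw [dist_comm]; exact mem_ball.mp hyb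
        have hd1 : dist x y ≤ 1 := le_trans hdr.le hr1
        have hdδ : ENNReal.ofReal (dist x y) ≤ δ :=
          le_trans (ENNReal.ofReal_le_ofReal hdr.le) hrδ
        have hdδ' : ENNReal.ofReal (dist y x) ≤ δ := by rwa [dist_comm]
        have hker1 : φlo ≤ ker s φ δ x y := by
          rw [ker, if_pos hdδ]
          have hexp : -((n : ℝ) + 2 * s x y) ≤ 0 := by
            have := (hs_bd x hx y hy).1
            have hn0 : (0:ℝ) ≤ n := Nat.cast_nonneg n
            nlinarith
          have h1 : (1:ℝ) ≤ dist x y ^ (-((n : ℝ) + 2 * s x y)) :=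
            Real.one_le_rpow_of_pos_of_le_one_of_nonpos hd0 hd1 hexp
          have hφ := (hφ_bd x hx y hy).1
          nlinarith
        have hker2 : φlo ≤ ker s φ δ y x := by
          rw [ker, if_pos hdδ']
          have hexp : -((n : ℝ) + 2 * s y x) ≤ 0 := by
            have := (hs_bd y hy x hx).1
            have hn0 : (0:ℝ) ≤ n := Nat.cast_nonneg n
            nlinarith
          have hd0' : 0 < dist y x := by rwa [dist_comm]
          have hd1' : dist y x ≤ 1 := by rwa [dist_comm]
          have h1 : (1:ℝ) ≤ dist y x ^ (-((n : ℝ) + 2 * s y x)) :=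
            Real.one_le_rpow_of_pos_of_le_one_of_nonpos hd0' hd1' hexp
          have hφ := (hφ_bd y hy x hx).1
          nlinarith
        have hker : φlo ≤ kerSym s φ δ x y := by rw [kerSym]; linarith
        rw [← ENNReal.ofReal_mul hφlo.le]
        apply ENNReal.ofReal_le_ofReal
        nlinarith [sq_nonneg (u x - u y)]
    · rw [indicator_of_notMem hyb]
      simp
  -- Step 2 : replace u by v
  have key2 : (∫⁻ x in D, ∫⁻ y in D,
        (ball x r).indicator (fun y => ENNReal.ofReal ((u x - u y) ^ 2)) y)
      = ∫⁻ x in D, ∫⁻ y in D,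
        (ball x r).indicator (fun y => ENNReal.ofReal ((v x - v y) ^ 2)) y := by
    apply lintegral_congr_ae
    filter_upwards [huv] with x hx
    apply lintegral_congr_ae
    filter_upwards [huv] with y hy
    by_cases hyb : y ∈ ball x r
    · rw [indicator_of_mem hyb, indicator_of_mem hyb, hx, hy]
    · rw [indicator_of_notMem hyb, indicator_of_notMem hyb]
  -- Step 3 : pass to the whole space and translate
  have key3 : (∫⁻ x in D, ∫⁻ y in D,
        (ball x r).indicator (fun y => ENNReal.ofReal ((v x - v y) ^ 2)) y)
      = ∫⁻ t in ball (0 : Pt n) r, G v t := by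
    -- the integrand vanishes unless x ∈ D and y ∈ D
    have hzero : ∀ x y : Pt n, (x ∉ D ∨ y ∉ D) →
        (ball x r).indicator (fun y => ENNReal.ofReal ((v x - v y) ^ 2)) y = 0 := by
      intro x y hxy
      by_cases hyb : y ∈ ball x r
      · rw [indicator_of_mem hyb]
        have hdist : dist x y < r := by rw [dist_comm]; exact mem_ball.mp hyb
        have hvx : v x = 0 ∨ v y = 0 := by
          by_contra hcon
          push_neg at hcon
          have hxΩ : x ∈ Ω := hv_supp x hcon.1
          have hyΩ : y ∈ Ω := hv_supp y hcon.2
          rcases hxy with h | h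
          · exact h (hΩD hxΩ)
          · exact h (hΩD hyΩ)
        have : v x - v y = 0 ∨ (v x = 0 ∧ v y ≠ 0) ∨ (v y = 0 ∧ v x ≠ 0) := by
          rcases hvx with h | h
          · by_cases h2 : v y = 0
            · left; rw [h, h2]; ring
            · right; left; exact ⟨h, h2⟩
          · by_cases h2 : v x = 0
            · left; rw [h, h2]; ring
            · right; right; exact ⟨h, h2⟩
        rcases this with h | ⟨h1, h2⟩ | ⟨h1, h2⟩
        · rw [h]; simp
        · -- v x = 0, v y ≠ 0 : y ∈ Ω hence x ∈ D and y ∈ D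
          have hyΩ : y ∈ Ω := hv_supp y h2
          have hxD : x ∈ D := hmemD y hyΩ x (by rwa [dist_comm])
          have hyD : y ∈ D := hΩD hyΩ
          rcases hxy with h | h
          · exact absurd hxD h
          · exact absurd hyD h
        · have hxΩ : x ∈ Ω := hv_supp x h2
          have hyD : y ∈ D := hmemD x hxΩ y hdist
          have hxD : x ∈ D := hΩD hxΩ
          rcases hxy with h | h
          · exact absurd hxD h
          · exact absurd hyD h
      · rw [indicator_of_notMem hyb]
    have step_a : (∫⁻ x in D, ∫⁻ y in D,
          (ball x r).indicator (fun y => ENNReal.ofReal ((v x - v y) ^ 2)) y)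
        = ∫⁻ x, ∫⁻ y, (ball x r).indicator (fun y => ENNReal.ofReal ((v x - v y) ^ 2)) y := by
      rw [← lintegral_indicator hDmeas]
      apply lintegral_congr
      intro x
      by_cases hx : x ∈ D
      · rw [indicator_of_mem hx, ← lintegral_indicator hDmeas]
        apply lintegral_congr
        intro y
        by_cases hy : y ∈ D
        · rw [indicator_of_mem hy]
        · rw [indicator_of_notMem hy, hzero x y (Or.inr hy)]
      · rw [indicator_of_notMem hx]
        symm
        rw [lintegral_eq_zero_iff]
        · exact Filter.Eventually.of_forall fun y => hzero x y (Or.inl hx)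
        · apply Measurable.indicator
          · exact ((hv_meas.comp measurable_const).sub hv_meas).pow measurable_const
              |>.ennreal_ofReal
          · exact measurableSet_ball
    rw [step_a]
    -- translate in the inner integral
    have step_b : ∀ x : Pt n, (∫⁻ y, (ball x r).indicator
          (fun y => ENNReal.ofReal ((v x - v y) ^ 2)) y)
        = ∫⁻ t, (ball (0 : Pt n) r).indicator
          (fun t => ENNReal.ofReal ((v x - v (x + t)) ^ 2)) t := by
      intro x
      rw [← lintegral_add_right_eq_self (fun y => (ball x r).indicator
          (fun y => ENNReal.ofReal ((v x - v y) ^ 2)) y) x]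
      apply lintegral_congr
      intro t
      have hmem : t + x ∈ ball x r ↔ t ∈ ball (0 : Pt n) r := by
        rw [mem_ball, mem_ball, dist_eq_norm, dist_eq_norm]
        have : t + x - x = t - 0 := by abel
        rw [this]
      by_cases ht : t ∈ ball (0 : Pt n) r
      · rw [indicator_of_mem (hmem.mpr ht), indicator_of_mem ht, add_comm t x]
      · rw [indicator_of_notMem (fun h => ht (hmem.mp h)), indicator_of_notMem ht]
    simp_rw [step_b]
    -- swap the integrals (Tonelli)
    have hswap : (∫⁻ x, ∫⁻ t, (ball (0 : Pt n) r).indicator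
          (fun t => ENNReal.ofReal ((v x - v (x + t)) ^ 2)) t)
        = ∫⁻ t, ∫⁻ x, (ball (0 : Pt n) r).indicator
          (fun t => ENNReal.ofReal ((v x - v (x + t)) ^ 2)) t := by
      apply lintegral_lintegral_swap
      apply Measurable.aemeasurable
      have hm : Measurable fun p : Pt n × Pt n =>
          ENNReal.ofReal ((v p.1 - v (p.1 + p.2)) ^ 2) :=
        (((hv_meas.comp measurable_fst).sub
          (hv_meas.comp (measurable_fst.add measurable_snd))).pow measurable_const).ennreal_ofReal
      have : (Function.uncurry fun x t => (ball (0 : Pt n) r).indicator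
            (fun t => ENNReal.ofReal ((v x - v (x + t)) ^ 2)) t)
          = (Set.univ ×ˢ ball (0 : Pt n) r).indicator
            (fun p : Pt n × Pt n => ENNReal.ofReal ((v p.1 - v (p.1 + p.2)) ^ 2)) := by
        funext p
        rcases p with ⟨x, t⟩
        by_cases ht : t ∈ ball (0 : Pt n) r
        · rw [Function.uncurry_apply_pair, indicator_of_mem ht,
            indicator_of_mem (by exact ⟨trivial, ht⟩)]
        · rw [Function.uncurry_apply_pair, indicator_of_notMem ht,
            indicator_of_notMem (fun h => ht h.2)]
      rw [this]
      exact hm.indicator (MeasurableSet.univ.prod measurableSet_ball)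
    rw [hswap, ← lintegral_indicator measurableSet_ball]
    apply lintegral_congr
    intro t
    by_cases ht : t ∈ ball (0 : Pt n) r
    · rw [indicator_of_mem ht]
      apply lintegral_congr
      intro x
      rw [indicator_of_mem ht]
    · rw [indicator_of_notMem ht]
      simp [indicator_of_notMem ht]
  -- Step 4 : lower bound on G on the annulus
  have key4 : ∀ t ∈ A, 2 * I ≤ 4 ^ N * G v t := by
    intro t ht
    have htr : r / 2 < ‖t‖ := by
      have := ht.2
      rw [mem_closedBall, dist_zero_right] at this
      push_neg at this
      exact this
    have hsep : ∀ x : Pt n, v x * v (x + N • t) = 0 := by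
      intro x
      by_contra hx
      have h1 : v x ≠ 0 := fun h => hx (by rw [h, zero_mul])
      have h2 : v (x + N • t) ≠ 0 := fun h => hx (by rw [h, mul_zero])
      have hxΩ : x ∈ ball (0 : Pt n) R := hΩR (hv_supp x h1)
      have hyΩ : x + N • t ∈ ball (0 : Pt n) R := hΩR (hv_supp _ h2)
      have hnt : ‖(N : ℕ) • t‖ = (N : ℝ) * ‖t‖ := by
        rw [← Nat.cast_smul_eq_nsmul ℝ, norm_smul, Real.norm_natCast]
      have hd : dist (x + N • t) x < 2 * R := by
        calc dist (x + N • t) x ≤ dist (x + N • t) 0 + dist (0 : Pt n) x := dist_triangle _ _ _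
          _ < R + R := by
              apply add_lt_add
              · exact mem_ball.mp (by rwa [mem_ball, dist_zero_right] at hyΩ ⊢) |>.trans_le le_rfl
              · rw [dist_comm]
                exact mem_ball.mp (by rwa [mem_ball, dist_zero_right] at hxΩ ⊢) |>.trans_le le_rfl
          _ = 2 * R := by ring
      have hd2 : dist (x + N • t) x = (N : ℝ) * ‖t‖ := by
        rw [dist_eq_norm]
        have : x + N • t - x = N • t := by abel
        rw [this, hnt]
      have hbig : 2 * R ≤ (N : ℝ) * ‖t‖ := by
        calc 2 * R = (4 * R) / 2 := by ring
          _ ≤ ((N : ℝ) * r) / 2 := by linarith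
          _ = (N : ℝ) * (r / 2) := by ring
          _ ≤ (N : ℝ) * ‖t‖ := by
              apply mul_le_mul_of_nonneg_left htr.le (Nat.cast_nonneg N)
      rw [hd2] at hd
      linarith
    have hGNt : G v (N • t) = 2 * I := by
      have hpt : ∀ x : Pt n, (v x - v (x + N • t)) ^ 2 = (v x) ^ 2 + (v (x + N • t)) ^ 2 := by
        intro x
        have := hsep x
        nlinarith [hsep x]
      rw [G]
      calc (∫⁻ x, ENNReal.ofReal ((v x - v (x + N • t)) ^ 2))
          = ∫⁻ x, (ENNReal.ofReal ((v x) ^ 2) + ENNReal.ofReal ((v (x + N • t)) ^ 2)) := by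
            apply lintegral_congr
            intro x
            rw [hpt x, ENNReal.ofReal_add (by positivity) (by positivity)]
        _ = I + ∫⁻ x, ENNReal.ofReal ((v (x + N • t)) ^ 2) := by
            rw [lintegral_add_left hI_meas]
        _ = I + I := by
            congr 1
            exact lintegral_add_right_eq_self (fun x => ENNReal.ofReal ((v x) ^ 2)) (N • t)
        _ = 2 * I := by ring
    rw [← hGNt]
    exact G_nsmul v hv_meas t N
  -- Step 5 : integrate over the annulus
  have key5 : (2 * I / 4 ^ N) * volume A ≤ ∫⁻ t in ball (0 : Pt n) r, G v t := by
    calc (2 * I / 4 ^ N) * volume A = ∫⁻ _ in A, (2 * I / 4 ^ N) := (setLIntegral_const _ _).symm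
      _ ≤ ∫⁻ t in A, G v t := by
          apply lintegral_mono_ae
          filter_upwards [ae_restrict_mem hA_meas] with t ht
          exact ENNReal.div_le_of_le_mul ((key4 t ht).trans_eq (mul_comm _ _))
      _ ≤ ∫⁻ t in ball (0 : Pt n) r, G v t := lintegral_mono_set diff_subset
  -- combine everything
  have hmain : c * I ≤ energySq s φ δ D u := by
    calc c * I = ENNReal.ofReal φlo * ((2 * I / 4 ^ N) * volume A) := by
          rw [hc_def]
          rw [div_eq_mul_inv, div_eq_mul_inv]
          ring
      _ ≤ ENNReal.ofReal φlo * ∫⁻ t in ball (0 : Pt n) r, G v t := by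
          exact mul_le_mul_right key5 _
      _ = ENNReal.ofReal φlo * ∫⁻ x in D, ∫⁻ y in D,
            (ball x r).indicator (fun y => ENNReal.ofReal ((u x - u y) ^ 2)) y := by
          rw [key2, key3]
      _ ≤ energySq s φ δ D u := key1
  have hIE : I ≤ energySq s φ δ D u / c := by
    rw [ENNReal.le_div_iff_mul_le (Or.inl hc0) (Or.inl hc_top)]
    rw [mul_comm]
    exact hmain
  calc eLpNorm u 2 (volume.restrict D) = I ^ (1/2 : ℝ) := hLp
    _ ≤ (energySq s φ δ D u / c) ^ (1/2 : ℝ) := ENNReal.rpow_le_rpow hIE (by norm_num)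
    _ = (c⁻¹ * energySq s φ δ D u) ^ (1/2 : ℝ) := by rw [div_eq_mul_inv, mul_comm]
    _ = (c⁻¹) ^ (1/2 : ℝ) * (energySq s φ δ D u) ^ (1/2 : ℝ) :=
        ENNReal.mul_rpow_of_nonneg _ _ (by norm_num)
    _ = ENNReal.ofReal Cp * (energySq s φ δ D u) ^ (1/2 : ℝ) := by
        rw [hCp_def, ENNReal.ofReal_toReal hrpow_ne_top]

end
end

section
/- Define β(r) := sup{|s(x,y)−s(y,x)| : x,y ∈ D, |x−y| ≤ r}. Assume (i) ∫₀¹ (β(r)|log r|)² r^{−1−2s̄} dr < ∞, and (ii) there exist L ≥ 0 and ε > 0 such that |φ(x,y)−φ(y,x)| ≤ L|x−y|^{s̄+ε} for all x,y ∈ D. Then there exists a finite constant A_γ such that sup_{x∈D} ∫_{{y∈D : γ_s(x,y)≠0}} γ_a(x,y)² / γ_s(x,y) dy ≤ A_γ < ∞. -/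
open MeasureTheory ENNReal Set

noncomputable section

section AuxLemmas

lemma exp_sub_exp_abs (u v : ℝ) : |Real.exp u - Real.exp v| ≤ |u - v| * Real.exp (max u v) := by
  wlog h : v ≤ u generalizing u v
  · rw [abs_sub_comm, abs_sub_comm u v, max_comm]; exact this v u (le_of_not_ge h)
  rw [abs_of_nonneg (sub_nonneg.2 (Real.exp_le_exp.2 h)), abs_of_nonneg (sub_nonneg.2 h),
    max_eq_left h]
  have h1 : 1 - (u - v) ≤ Real.exp (-(u-v)) := by
    have := Real.add_one_le_exp (-(u-v)); linarith
  have h2 : Real.exp v = Real.exp u * Real.exp (-(u-v)) := by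
    rw [← Real.exp_add]; ring_nf
  nlinarith [Real.exp_pos u, Real.exp_pos v]

lemma rpow_sub_rpow_abs {r : ℝ} (hr : 0 < r) (a b : ℝ) :
    |r ^ (-a) - r ^ (-b)| ≤ |a - b| * |Real.log r| * max (r ^ (-a)) (r ^ (-b)) := by
  rw [Real.rpow_def_of_pos hr, Real.rpow_def_of_pos hr]
  calc |Real.exp (Real.log r * -a) - Real.exp (Real.log r * -b)|
      ≤ |Real.log r * -a - Real.log r * -b| *
        Real.exp (max (Real.log r * -a) (Real.log r * -b)) := exp_sub_exp_abs _ _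
    _ = |a - b| * |Real.log r| * max (Real.exp (Real.log r * -a)) (Real.exp (Real.log r * -b)) := by
        rw [Real.exp_monotone.map_max]
        congr 1
        rw [← abs_mul, ← abs_neg]; ring_nf

lemma sq_le_of_abs_le' {x y : ℝ} (h : |x| ≤ y) : x^2 ≤ y^2 := by
  nlinarith [abs_nonneg x, sq_abs x]

lemma div_core_half {u v : ℝ} (hu : 0 < u) (hv : 0 < v) :
    ((u - v)/2)^2 / ((u + v)/2) ≤ (u + v)/2 := by
  rw [div_le_iff₀ (by positivity)]
  nlinarith [mul_pos hu hv]

lemma asym_div_bound {A B M p q φlo φhi β ℓ : ℝ}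
    (hA : 0 < A) (hB : 0 < B) (hφlo : 0 < φlo)
    (hp1 : φlo ≤ p) (hq1 : φlo ≤ q) (hq2 : q ≤ φhi)
    (hMm : M = max A B) (hβ0 : 0 ≤ β)
    (hAB : (A - B)^2 ≤ 4 * β^2 * ℓ^2 * M^2) :
    ((p * A - q * B)/2)^2 / ((p * A + q * B)/2) ≤
      (p - q)^2 * A / φlo + 4 * φhi^2 * β^2 * ℓ^2 * M / φlo := by
  have hp0 : 0 < p := lt_of_lt_of_le hφlo hp1
  have hq0 : 0 < q := lt_of_lt_of_le hφlo hq1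
  have hφhi0 : 0 < φhi := lt_of_lt_of_le hq0 hq2
  have hM : 0 < M := hMm ▸ lt_max_of_lt_left hA
  have hS0 : 0 < (p * A + q * B)/2 := by positivity
  rw [div_le_iff₀ hS0]
  have h2 : φlo * A ≤ p * A + q * B := by nlinarith
  have h3 : φlo * M ≤ p * A + q * B := by
    rcases max_cases A B with ⟨hM1, _⟩ | ⟨hM1, _⟩ <;> rw [hMm, hM1] <;> nlinarith
  have h4 : q^2 * (A - B)^2 ≤ φhi^2 * (4 * β^2 * ℓ^2 * M^2) := by
    have hq2' : q^2 ≤ φhi^2 := by nlinarith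
    have := mul_le_mul hq2' hAB (sq_nonneg _) (by positivity)
    linarith
  have h5 : ((p*A - q*B)/2)^2 ≤ ((p-q)^2*A^2 + q^2*(A-B)^2) / 2 := by
    nlinarith [sq_nonneg ((p-q)*A - q*(A-B))]
  have e1 : (p-q)^2*A * (φlo * A) ≤ (p-q)^2*A * (p*A + q*B) :=
    mul_le_mul_of_nonneg_left h2 (by positivity)
  have e2 : (4*φhi^2*β^2*ℓ^2*M) * (φlo*M) ≤ (4*φhi^2*β^2*ℓ^2*M) * (p*A+q*B) :=
    mul_le_mul_of_nonneg_left h3 (by positivity)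
  rw [← add_div, div_mul_eq_mul_div, le_div_iff₀ hφlo]
  nlinarith [mul_le_mul_of_nonneg_left h4 hφlo.le,
    mul_le_mul_of_nonneg_left h5 hφlo.le]

lemma kernel_pointwise_core
    {r a b p q φlo φhi β L ε slo shi : ℝ} (nn : ℝ)
    (hr0 : 0 < r) (hφlo : 0 < φlo) (hφhi0 : 0 < φhi)
    (ha1 : nn + 2*slo ≤ a) (ha2 : a ≤ nn + 2*shi)
    (hb1 : nn + 2*slo ≤ b) (hb2 : b ≤ nn + 2*shi)
    (hp1 : φlo ≤ p) (hp2 : p ≤ φhi) (hq1 : φlo ≤ q) (hq2 : q ≤ φhi)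
    (hβab : |a - b| ≤ 2*β) (hβ0 : 0 ≤ β)
    (hpq : |p - q| ≤ L * r ^ (shi + ε)) :
    ((p * r^(-a) - q * r^(-b))/2)^2 / ((p * r^(-a) + q * r^(-b))/2) ≤
      if r < 1 then
        (L^2/φlo) * r ^ (2*ε - nn) +
          (4*φhi^2/φlo) * β^2 * (Real.log r)^2 * r ^ (-nn - 2*shi)
      else φhi * r ^ (-nn - 2*slo) := by
  have hA : 0 < r ^ (-a) := Real.rpow_pos_of_pos hr0 _
  have hB : 0 < r ^ (-b) := Real.rpow_pos_of_pos hr0 _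
  have hp0 : 0 < p := lt_of_lt_of_le hφlo hp1
  have hq0 : 0 < q := lt_of_lt_of_le hφlo hq1
  have hAB : (r^(-a) - r^(-b))^2 ≤
      4 * β^2 * (Real.log r)^2 * (max (r^(-a)) (r^(-b)))^2 := by
    have h1 := rpow_sub_rpow_abs hr0 a b
    have hM : 0 < max (r^(-a)) (r^(-b)) := lt_max_of_lt_left hA
    have h3 : |r^(-a) - r^(-b)| ≤ 2 * β * |Real.log r| * max (r^(-a)) (r^(-b)) := by
      refine h1.trans ?_
      have := mul_le_mul_of_nonneg_right hβab (abs_nonneg (Real.log r))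
      exact mul_le_mul_of_nonneg_right this hM.le
    have h4 := sq_le_of_abs_le' h3
    calc (r^(-a) - r^(-b))^2 ≤ (2 * β * |Real.log r| * max (r^(-a)) (r^(-b)))^2 := h4
      _ = 4 * β^2 * (Real.log r)^2 * (max (r^(-a)) (r^(-b)))^2 := by
          rw [mul_pow, mul_pow, mul_pow, sq_abs]; ring
  have hmain := asym_div_bound hA hB hφlo hp1 hq1 hq2 rfl hβ0 hAB
  by_cases hr1 : r < 1
  · rw [if_pos hr1]
    have hE : r^(-a) ≤ r ^ (-nn - 2*shi) :=
      Real.rpow_le_rpow_of_exponent_ge hr0 hr1.le (by linarith)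
    have hBE : r^(-b) ≤ r ^ (-nn - 2*shi) :=
      Real.rpow_le_rpow_of_exponent_ge hr0 hr1.le (by linarith)
    have hME : max (r^(-a)) (r^(-b)) ≤ r ^ (-nn - 2*shi) := max_le hE hBE
    have hφdiff : (p - q)^2 ≤ L^2 * r ^ (2*(shi + ε)) := by
      have h1 := sq_le_of_abs_le' hpq
      have h2 : L^2 * r ^ (2*(shi + ε)) = (L * r ^ (shi + ε))^2 := by
        have he : r ^ (2*(shi + ε)) = r ^ (shi + ε) * r ^ (shi + ε) := by
          rw [← Real.rpow_add hr0]; congr 1; ring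
        rw [he]; ring
      rw [h2]; exact h1
    refine hmain.trans ?_
    have t1 : (p - q)^2 * r^(-a) / φlo ≤ (L^2/φlo) * r ^ (2*ε - nn) := by
      have hprod : (p - q)^2 * r^(-a) ≤ (L^2 * r ^ (2*(shi + ε))) * r ^ (-nn - 2*shi) :=
        mul_le_mul hφdiff hE hA.le (by positivity)
      have hre : L^2 * r ^ (2*(shi + ε)) * r ^ (-nn - 2*shi) = L^2 * r ^ (2*ε - nn) := by
        rw [mul_assoc, ← Real.rpow_add hr0]
        congr 2
        ring
      rw [div_mul_eq_mul_div, div_le_div_iff₀ hφlo hφlo]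
      have := mul_le_mul_of_nonneg_right (hprod.trans (le_of_eq hre)) hφlo.le
      linarith
    have t2 : 4 * φhi^2 * β^2 * (Real.log r)^2 * max (r^(-a)) (r^(-b)) / φlo ≤
        (4*φhi^2/φlo) * β^2 * (Real.log r)^2 * r ^ (-nn - 2*shi) := by
      rw [div_le_iff₀ hφlo]
      have hprod : 4 * φhi^2 * β^2 * (Real.log r)^2 * max (r^(-a)) (r^(-b)) ≤
          4 * φhi^2 * β^2 * (Real.log r)^2 * r ^ (-nn - 2*shi) :=
        mul_le_mul_of_nonneg_left hME (by positivity)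
      refine hprod.trans (le_of_eq ?_)
      field_simp
    linarith
  · push_neg at hr1
    rw [if_neg (not_lt.2 hr1)]
    have h6 := div_core_half (mul_pos hp0 hA) (mul_pos hq0 hB)
    refine h6.trans ?_
    have hAle : r^(-a) ≤ r ^ (-nn - 2*slo) :=
      Real.rpow_le_rpow_of_exponent_le hr1 (by linarith)
    have hBle : r^(-b) ≤ r ^ (-nn - 2*slo) :=
      Real.rpow_le_rpow_of_exponent_le hr1 (by linarith)
    have hx1 := mul_le_mul hp2 hAle hA.le hφhi0.le
    have hx2 := mul_le_mul hq2 hBle hB.le hφhi0.le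
    linarith

open Metric in
lemma lintegral_norm_aux {n : ℕ} (hn : 1 ≤ n) (f : ℝ → ℝ≥0∞) (hf : Measurable f) :
    ∫⁻ x : Pt n, f ‖x‖ = (volume : Measure (Pt n)).toSphere univ *
      ∫⁻ r in Ioi (0:ℝ), ENNReal.ofReal (r ^ (n - 1)) * f r := by
  have hnt : Nontrivial (Pt n) := by
    have : Nonempty (Fin n) := Fin.pos_iff_nonempty.1 hn
    infer_instance
  have hdim : Module.finrank ℝ (Pt n) = n := finrank_euclideanSpace_fin
  set μ : Measure (Pt n) := volume
  have h0 : ∫⁻ x : Pt n, f ‖x‖ ∂μ = ∫⁻ x in ({0}ᶜ : Set (Pt n)), f ‖x‖ ∂μ := by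
    rw [MeasureTheory.restrict_compl_singleton]
  rw [h0, ← lintegral_subtype_comap (measurableSet_singleton (0:Pt n)).compl (fun x => f ‖x‖)]
  have hmp := μ.measurePreserving_homeomorphUnitSphereProd
  rw [hdim] at hmp
  have hg : Measurable fun p : sphere (0:Pt n) 1 × Ioi (0:ℝ) => f p.2.1 :=
    hf.comp (measurable_subtype_coe.comp measurable_snd)
  have h1 : ∫⁻ x : ({0}ᶜ : Set (Pt n)), f ‖(x:Pt n)‖ ∂(μ.comap (↑)) =
      ∫⁻ p : sphere (0:Pt n) 1 × Ioi (0:ℝ), f p.2.1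
        ∂(μ.toSphere.prod (.volumeIoiPow (n - 1))) := by
    rw [← hmp.lintegral_comp hg]
    simp
  rw [h1, lintegral_prod _ hg.aemeasurable]
  simp only [lintegral_const]
  rw [mul_comm]
  congr 1
  rw [Measure.volumeIoiPow,
    lintegral_withDensity_eq_lintegral_mul _
      (f := fun r : Ioi (0:ℝ) => ENNReal.ofReal (r.1 ^ (n - 1)))
      (g := fun r : Ioi (0:ℝ) => f r.1) (by fun_prop) (hf.comp measurable_subtype_coe),
    ← lintegral_subtype_comap measurableSet_Ioi
      (fun r : ℝ => ENNReal.ofReal (r ^ (n - 1)) * f r)]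
  rfl

end AuxLemmas

/-- **Proposition (bound on the kernel asymmetry).** Under the integrability condition on
`β(r)|log r|` and Hölder-type control of the asymmetry of `φ`, the quantity
`sup_{x∈D} ∫_{γ_s(x,·)≠0} γ_a(x,y)²/γ_s(x,y) dy` is bounded by a finite constant `A_γ`. -/
theorem kernel_asymmetry_bound
    (n : ℕ) (hn : 1 ≤ n)
    (Ω : Set (Pt n)) (hΩo : IsOpen Ω) (hΩb : Bornology.IsBounded Ω) (hΩne : Ω.Nonempty)
    (δ : ℝ≥0∞) (hδ : 0 < δ)
    (s φ : Pt n → Pt n → ℝ)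
    (hs_meas : Measurable (Function.uncurry s)) (hφ_meas : Measurable (Function.uncurry φ))
    (slo shi φlo φhi : ℝ) (hslo : 0 < slo) (hshi : shi < 1) (hφlo : 0 < φlo)
    (D : Set (Pt n)) (hD : D = Ω ∪ interactionDomain Ω δ)
    (hs_bd : ∀ x ∈ D, ∀ y ∈ D, slo ≤ s x y ∧ s x y ≤ shi)
    (hφ_bd : ∀ x ∈ D, ∀ y ∈ D, φlo ≤ φ x y ∧ φ x y ≤ φhi)
    (hbeta : ∫⁻ r in Set.Ioo (0:ℝ) 1,
        ENNReal.ofReal ((betaFn s D r * |Real.log r|) ^ 2 * r ^ (-1 - 2 * shi)) < ⊤)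
    (hphiHolder : ∃ L : ℝ, 0 ≤ L ∧ ∃ ε : ℝ, 0 < ε ∧
        ∀ x ∈ D, ∀ y ∈ D, |φ x y - φ y x| ≤ L * dist x y ^ (shi + ε)) :
    ∃ Aγ : ℝ, ∀ x ∈ D,
      (∫⁻ y in {y ∈ D | kerSym s φ δ x y ≠ 0},
          ENNReal.ofReal ((kerAnti s φ δ x y) ^ 2 / kerSym s φ δ x y)) ≤
        ENNReal.ofReal Aγ := by
  classical
  obtain ⟨L, hL, ε, hε, hHolder⟩ := hphiHolder
  obtain ⟨x₀, hx₀'⟩ := hΩne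
  have hx₀ : x₀ ∈ D := hD ▸ Or.inl hx₀'
  have hsls : slo ≤ shi := le_trans (hs_bd x₀ hx₀ x₀ hx₀).1 (hs_bd x₀ hx₀ x₀ hx₀).2
  have hshi0 : 0 < shi := lt_of_lt_of_le hslo hsls
  have hφls : φlo ≤ φhi := le_trans (hφ_bd x₀ hx₀ x₀ hx₀).1 (hφ_bd x₀ hx₀ x₀ hx₀).2
  have hφhi0 : 0 < φhi := lt_of_lt_of_le hφlo hφls
  -- basic facts about betaFn
  have hbdd : ∀ r : ℝ, BddAbove {t | ∃ x ∈ D, ∃ y ∈ D, dist x y ≤ r ∧ t = |s x y - s y x|} := by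
    intro r
    refine ⟨shi - slo, ?_⟩
    rintro t ⟨x, hx, y, hy, -, rfl⟩
    have h1 := hs_bd x hx y hy; have h2 := hs_bd y hy x hx
    rw [abs_sub_le_iff]; constructor <;> linarith [h1.1, h1.2, h2.1, h2.2]
  have hbeta_nonneg : ∀ r : ℝ, 0 ≤ betaFn s D r := by
    intro r
    rcases le_or_gt 0 r with h | h
    · refine le_csSup (hbdd r) ⟨x₀, hx₀, x₀, hx₀, by simpa using h, by simp⟩
    · have he : {t | ∃ x ∈ D, ∃ y ∈ D, dist x y ≤ r ∧ t = |s x y - s y x|} = ∅ := by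
        rw [eq_empty_iff_forall_notMem]
        rintro t ⟨x, hx, y, hy, hd, rfl⟩
        exact absurd (dist_nonneg.trans hd) (not_le.2 h)
      unfold betaFn
      rw [he, Real.sSup_empty]
  have hbeta_mono : Monotone (betaFn s D) := by
    intro r1 r2 h12
    rcases eq_empty_or_nonempty
      {t | ∃ x ∈ D, ∃ y ∈ D, dist x y ≤ r1 ∧ t = |s x y - s y x|} with he | hne
    · unfold betaFn
      rw [he, Real.sSup_empty]
      exact hbeta_nonneg r2
    · refine csSup_le_csSup (hbdd r2) hne ?_
      rintro t ⟨x, hx, y, hy, hd, ht⟩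
      exact ⟨x, hx, y, hy, hd.trans h12, ht⟩
  have hbeta_meas : Measurable (betaFn s D) := hbeta_mono.measurable
  -- the radial majorant
  set g : ℝ → ℝ := fun r =>
    if r < 1 then
      (L^2/φlo) * r ^ (2*ε - (n:ℝ)) +
        (4*φhi^2/φlo) * (betaFn s D r)^2 * (Real.log r)^2 * r ^ (-(n:ℝ) - 2*shi)
    else φhi * r ^ (-(n:ℝ) - 2*slo) with hgdef
  have hg_meas : Measurable g := by
    have h1 := Real.measurable_log
    have h2 := hbeta_meas
    apply Measurable.ite (measurableSet_Iio (a := (1:ℝ))) <;> fun_prop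
  -- the pointwise bound
  have hpt : ∀ x ∈ D, ∀ y ∈ D, kerSym s φ δ x y ≠ 0 →
      (kerAnti s φ δ x y)^2 / kerSym s φ δ x y ≤ g (dist x y) := by
    intro x hx y hy hne
    obtain ⟨hs1, hs2⟩ := hs_bd x hx y hy
    obtain ⟨hs3, hs4⟩ := hs_bd y hy x hx
    obtain ⟨hp1, hp2⟩ := hφ_bd x hx y hy
    obtain ⟨hq1, hq2⟩ := hφ_bd y hy x hx
    have hn' : (1:ℝ) ≤ (n:ℝ) := by exact_mod_cast hn
    have hr0 : 0 < dist x y := by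
      rcases (dist_nonneg (x := x) (y := y)).lt_or_eq with h | h
      · exact h
      · exfalso
        apply hne
        have hd : dist x y = 0 := h.symm
        have hz1 : ker s φ δ x y = 0 := by
          unfold ker
          rw [hd, if_pos (by simp), Real.zero_rpow (by intro hc; nlinarith), mul_zero]
        have hz2 : ker s φ δ y x = 0 := by
          unfold ker
          rw [dist_comm y x, hd, if_pos (by simp),
            Real.zero_rpow (by intro hc; nlinarith), mul_zero]
        unfold kerSym
        rw [hz1, hz2]
        norm_num
    have hrδ : ENNReal.ofReal (dist x y) ≤ δ := by
      by_contra hcon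
      apply hne
      unfold kerSym ker
      rw [dist_comm y x, if_neg hcon, if_neg hcon]
      norm_num
    have hk1 : ker s φ δ x y = φ x y * dist x y ^ (-((n:ℝ) + 2 * s x y)) := by
      unfold ker; rw [if_pos hrδ]
    have hk2 : ker s φ δ y x = φ y x * dist x y ^ (-((n:ℝ) + 2 * s y x)) := by
      unfold ker; rw [dist_comm y x, if_pos hrδ]
    have hSym : kerSym s φ δ x y =
        (φ x y * dist x y ^ (-((n:ℝ) + 2 * s x y)) +
          φ y x * dist x y ^ (-((n:ℝ) + 2 * s y x))) / 2 := by
      unfold kerSym; rw [hk1, hk2]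
    have hAnti : kerAnti s φ δ x y =
        (φ x y * dist x y ^ (-((n:ℝ) + 2 * s x y)) -
          φ y x * dist x y ^ (-((n:ℝ) + 2 * s y x))) / 2 := by
      unfold kerAnti; rw [hk1, hk2]
    have hβ : |s x y - s y x| ≤ betaFn s D (dist x y) :=
      le_csSup (hbdd _) ⟨x, hx, y, hy, le_refl _, rfl⟩
    have hβab : |((n:ℝ) + 2 * s x y) - ((n:ℝ) + 2 * s y x)| ≤
        2 * betaFn s D (dist x y) := by
      have he : ((n:ℝ) + 2 * s x y) - ((n:ℝ) + 2 * s y x) = 2 * (s x y - s y x) := by ring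
      rw [he, abs_mul, abs_two]
      linarith
    have hcore := kernel_pointwise_core (r := dist x y) (a := (n:ℝ) + 2 * s x y)
      (b := (n:ℝ) + 2 * s y x) (nn := (n:ℝ)) (slo := slo) (shi := shi) (ε := ε) (L := L)
      (β := betaFn s D (dist x y)) (φlo := φlo) (φhi := φhi)
      (p := φ x y) (q := φ y x) hr0 hφlo hφhi0
      (by linarith) (by linarith) (by linarith) (by linarith)
      hp1 hp2 hq1 hq2 hβab (hbeta_nonneg _) (hHolder x hx y hy)
    rw [hSym, hAnti, hgdef]
    exact hcore
  -- the total integral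
  set I : ℝ≥0∞ := ∫⁻ z : Pt n, ENNReal.ofReal (g ‖z‖) with hIdef
  have hI : I ≠ ⊤ := by
    rw [hIdef, lintegral_norm_aux hn (fun r => ENNReal.ofReal (g r))
      (ENNReal.measurable_ofReal.comp hg_meas)]
    refine ENNReal.mul_ne_top (measure_ne_top _ _) ?_
    rw [← Ioo_union_Ici_eq_Ioi (zero_lt_one (α := ℝ)),
      lintegral_union measurableSet_Ici
        (Set.disjoint_left.2 fun r hr hr' => absurd hr.2 (not_lt.2 hr'))]
    refine ENNReal.add_ne_top.2 ⟨?_, ?_⟩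
    · -- near zero
      have hC1 : (0:ℝ) ≤ L^2/φlo := by positivity
      have hC2 : (0:ℝ) ≤ 4*φhi^2/φlo := by positivity
      have hb1 : ∫⁻ r in Ioo (0:ℝ) 1, ENNReal.ofReal (r ^ (n-1)) * ENNReal.ofReal (g r) ≤
          ∫⁻ r in Ioo (0:ℝ) 1, (ENNReal.ofReal ((L^2/φlo) * r ^ (2*ε - 1)) +
            ENNReal.ofReal ((4*φhi^2/φlo) *
              ((betaFn s D r * |Real.log r|) ^ 2 * r ^ (-1 - 2 * shi)))) := by
        refine setLIntegral_mono ?_ ?_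
        · have h1 := Real.measurable_log
          have h2 := hbeta_meas
          fun_prop
        · rintro r ⟨h0r, hr1⟩
          have hrn : (r:ℝ) ^ (n-1:ℕ) = r ^ ((n:ℝ) - 1) := by
            rw [← Real.rpow_natCast r (n-1), Nat.cast_sub hn, Nat.cast_one]
          rw [← ENNReal.ofReal_mul (by positivity), hrn]
          refine le_trans (ENNReal.ofReal_le_ofReal (le_of_eq ?_)) ENNReal.ofReal_add_le
          have hgr : g r = (L^2/φlo) * r ^ (2*ε - (n:ℝ)) +
              (4*φhi^2/φlo) * (betaFn s D r)^2 * (Real.log r)^2 * r ^ (-(n:ℝ) - 2*shi) := by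
            rw [hgdef]; simp only [if_pos hr1]
          have e1 : r ^ ((n:ℝ)-1) * r ^ (2*ε - (n:ℝ)) = r ^ (2*ε - 1) := by
            rw [← Real.rpow_add h0r]; congr 1; ring
          have e2 : r ^ ((n:ℝ)-1) * r ^ (-(n:ℝ) - 2*shi) = r ^ (-1 - 2*shi) := by
            rw [← Real.rpow_add h0r]; congr 1; ring
          have expand : r ^ ((n:ℝ)-1) * g r =
              (L^2/φlo) * (r ^ ((n:ℝ)-1) * r ^ (2*ε - (n:ℝ))) +
              (4*φhi^2/φlo) * (betaFn s D r)^2 * (Real.log r)^2 *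
                (r ^ ((n:ℝ)-1) * r ^ (-(n:ℝ) - 2*shi)) := by
            rw [hgr]; ring
          rw [expand, e1, e2, mul_pow, sq_abs]
          ring
      refine ne_top_of_le_ne_top ?_ hb1
      rw [lintegral_add_left (by
        have h1 := Real.measurable_log
        fun_prop)]
      refine ENNReal.add_ne_top.2 ⟨?_, ?_⟩
      · have hint : IntegrableOn (fun r : ℝ => r ^ (2*ε - 1)) (Ioo 0 1) := by
          have h := intervalIntegral.intervalIntegrable_rpow' (a := (0:ℝ)) (b := 1)
            (by linarith : (-1:ℝ) < 2*ε - 1)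
          rwa [intervalIntegrable_iff_integrableOn_Ioo_of_le zero_le_one] at h
        have heq : ∫⁻ r in Ioo (0:ℝ) 1, ENNReal.ofReal ((L^2/φlo) * r ^ (2*ε - 1)) =
            ENNReal.ofReal (L^2/φlo) * ∫⁻ r in Ioo (0:ℝ) 1, ENNReal.ofReal (r ^ (2*ε - 1)) := by
          simp_rw [ENNReal.ofReal_mul hC1]
          rw [lintegral_const_mul' _ _ ENNReal.ofReal_ne_top]
        rw [heq]
        refine ENNReal.mul_ne_top ENNReal.ofReal_ne_top ?_
        exact (lt_of_le_of_lt (lintegral_mono fun r => Real.ofReal_le_enorm _) hint.2).ne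
      · have heq : ∫⁻ r in Ioo (0:ℝ) 1,
            ENNReal.ofReal ((4*φhi^2/φlo) *
              ((betaFn s D r * |Real.log r|) ^ 2 * r ^ (-1 - 2 * shi))) =
            ENNReal.ofReal (4*φhi^2/φlo) * ∫⁻ r in Ioo (0:ℝ) 1,
              ENNReal.ofReal ((betaFn s D r * |Real.log r|) ^ 2 * r ^ (-1 - 2 * shi)) := by
          simp_rw [ENNReal.ofReal_mul hC2]
          rw [lintegral_const_mul' _ _ ENNReal.ofReal_ne_top]
        rw [heq]
        exact ENNReal.mul_ne_top ENNReal.ofReal_ne_top hbeta.ne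
    · -- tail
      have hC3 : (0:ℝ) ≤ φhi := hφhi0.le
      have heq : ∫⁻ r in Ici (1:ℝ), ENNReal.ofReal (r ^ (n-1)) * ENNReal.ofReal (g r) =
          ∫⁻ r in Ici (1:ℝ), ENNReal.ofReal (φhi * r ^ (-1 - 2*slo)) := by
        refine setLIntegral_congr_fun measurableSet_Ici ?_
        intro r (hr : (1:ℝ) ≤ r)
        dsimp only
        have h0r : (0:ℝ) < r := lt_of_lt_of_le zero_lt_one hr
        have hrn : (r:ℝ) ^ (n-1:ℕ) = r ^ ((n:ℝ) - 1) := by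
          rw [← Real.rpow_natCast r (n-1), Nat.cast_sub hn, Nat.cast_one]
        have hgr : g r = φhi * r ^ (-(n:ℝ) - 2*slo) := by
          rw [hgdef]; simp only [if_neg (not_lt.2 hr)]
        rw [← ENNReal.ofReal_mul (by positivity), hrn, hgr]
        congr 1
        have e2 : r ^ ((n:ℝ)-1) * r ^ (-(n:ℝ) - 2*slo) = r ^ (-1 - 2*slo) := by
          rw [← Real.rpow_add h0r]; congr 1; ring
        calc r ^ ((n:ℝ)-1) * (φhi * r ^ (-(n:ℝ) - 2*slo))
            = φhi * (r ^ ((n:ℝ)-1) * r ^ (-(n:ℝ) - 2*slo)) := by ring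
          _ = φhi * r ^ (-1 - 2*slo) := by rw [e2]
      rw [heq, ← Measure.restrict_congr_set Ioi_ae_eq_Ici]
      have hint : IntegrableOn (fun r : ℝ => r ^ (-1 - 2*slo)) (Ioi 1) :=
        integrableOn_Ioi_rpow_of_lt (by linarith) zero_lt_one
      have heq2 : ∫⁻ r in Ioi (1:ℝ), ENNReal.ofReal (φhi * r ^ (-1 - 2*slo)) =
          ENNReal.ofReal φhi * ∫⁻ r in Ioi (1:ℝ), ENNReal.ofReal (r ^ (-1 - 2*slo)) := by
        simp_rw [ENNReal.ofReal_mul hC3]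
        rw [lintegral_const_mul' _ _ ENNReal.ofReal_ne_top]
      rw [heq2]
      refine ENNReal.mul_ne_top ENNReal.ofReal_ne_top ?_
      exact (lt_of_le_of_lt (lintegral_mono fun r => Real.ofReal_le_enorm _) hint.2).ne
  -- conclusion
  refine ⟨I.toReal, fun x hx => ?_⟩
  have hmeasH : Measurable fun y : Pt n => ENNReal.ofReal (g (dist x y)) :=
    ENNReal.measurable_ofReal.comp
      (hg_meas.comp (Continuous.measurable (continuous_const.dist continuous_id)))
  calc ∫⁻ y in {y ∈ D | kerSym s φ δ x y ≠ 0},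
        ENNReal.ofReal ((kerAnti s φ δ x y) ^ 2 / kerSym s φ δ x y)
      ≤ ∫⁻ y in {y ∈ D | kerSym s φ δ x y ≠ 0}, ENNReal.ofReal (g (dist x y)) := by
        refine setLIntegral_mono hmeasH ?_
        rintro y ⟨hy, hney⟩
        exact ENNReal.ofReal_le_ofReal (hpt x hx y hy hney)
    _ ≤ ∫⁻ y, ENNReal.ofReal (g (dist x y)) := setLIntegral_le_lintegral _ _
    _ = I := by
        rw [hIdef]
        have hdd : ∀ y : Pt n, dist x y = ‖y - x‖ := fun y => by
          rw [dist_comm, dist_eq_norm]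
        simp_rw [hdd]
        exact lintegral_sub_right_eq_self (fun z => ENNReal.ofReal (g ‖z‖)) x
    _ = ENNReal.ofReal I.toReal := (ENNReal.ofReal_toReal hI).symm

end
end

section
/- (Near-field estimate for the coefficient asymmetry.) Define γ_{a,1}(x,y) := (1/2)(φ(x,y)−φ(y,x)) |x−y|^{−n−2s(x,y)} for |x−y| ≤ δ and 0 otherwise. If there exist L ≥ 0 and ε > 0 such that |φ(x,y)−φ(y,x)| ≤ L|x−y|^{s̄+ε} for all x,y ∈ D, then sup_{x∈D} ∫_{{y ∈ D : |x−y| ≤ δ̲, γ_s(x,y) ≠ 0}} γ_{a,1}(x,y)² / γ_s(x,y) dy < ∞. -/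
open MeasureTheory ENNReal Set

noncomputable section

lemma riesz_finite (n : ℕ) (hn : 1 ≤ n) (a : ℝ) (ha : -(n : ℝ) < a) :
    ∫⁻ z in Metric.closedBall (0 : Pt n) 1, ENNReal.ofReal (‖z‖ ^ a) < ⊤ := by
  rcases le_or_gt 0 a with ha0 | ha0
  · -- bounded integrand
    calc ∫⁻ z in Metric.closedBall (0 : Pt n) 1, ENNReal.ofReal (‖z‖ ^ a)
        ≤ ∫⁻ _ in Metric.closedBall (0 : Pt n) 1, 1 := by
          refine setLIntegral_mono measurable_const fun z hz => ?_
          refine ENNReal.ofReal_le_one.2 (Real.rpow_le_one (norm_nonneg z) ?_ ha0)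
          simpa [Metric.mem_closedBall, dist_zero_right] using hz
      _ = volume (Metric.closedBall (0 : Pt n) 1) := by simp
      _ < ⊤ := measure_closedBall_lt_top
  · have haneg : a ≠ 0 := ha0.ne
    have hmeas : Measurable fun z : Pt n => ‖z‖ ^ a :=
      by fun_prop
    set μ := volume.restrict (Metric.closedBall (0 : Pt n) 1) with hμ
    have hnn : 0 ≤ᵐ[μ] fun z : Pt n => ‖z‖ ^ a :=
      Filter.Eventually.of_forall fun z => Real.rpow_nonneg (norm_nonneg z) a
    rw [lintegral_eq_lintegral_meas_le μ hnn hmeas.aemeasurable]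
    set mB := volume (Metric.ball (0 : Pt n) 1) with hmB
    have hfr : Module.finrank ℝ (Pt n) = n := finrank_euclideanSpace_fin
    -- bound for t > 1
    have hsub : ∀ t : ℝ, 0 < t →
        {z : Pt n | t ≤ ‖z‖ ^ a} ⊆ Metric.closedBall 0 (t ^ a⁻¹) := by
      intro t ht z hz
      simp only [mem_setOf_eq] at hz
      have hz0 : z ≠ 0 := by
        rintro rfl
        simp [Real.zero_rpow haneg] at hz
        linarith
      have hznorm : 0 < ‖z‖ := norm_pos_iff.2 hz0
      rw [Metric.mem_closedBall, dist_zero_right]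
      exact (Real.le_rpow_inv_iff_of_neg hznorm ht ha0).2 hz
    calc ∫⁻ t in Ioi (0:ℝ), μ {z | t ≤ ‖z‖ ^ a}
        ≤ ∫⁻ t in Ioc (0:ℝ) 1 ∪ Ioi 1, μ {z | t ≤ ‖z‖ ^ a} :=
          lintegral_mono_set Ioi_subset_Ioc_union_Ioi
      _ ≤ (∫⁻ t in Ioc (0:ℝ) 1, μ {z | t ≤ ‖z‖ ^ a}) +
            ∫⁻ t in Ioi (1:ℝ), μ {z | t ≤ ‖z‖ ^ a} := lintegral_union_le _ _ _
      _ < ⊤ := by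
          refine ENNReal.add_lt_top.2 ⟨?_, ?_⟩
          · calc ∫⁻ t in Ioc (0:ℝ) 1, μ {z | t ≤ ‖z‖ ^ a}
                ≤ ∫⁻ _ in Ioc (0:ℝ) 1, volume (Metric.closedBall (0 : Pt n) 1) := by
                  refine setLIntegral_mono measurable_const fun t ht => ?_
                  calc μ {z | t ≤ ‖z‖ ^ a} ≤ μ univ := measure_mono (subset_univ _)
                    _ = volume (Metric.closedBall (0 : Pt n) 1) := by
                        simp [hμ]
              _ = volume (Metric.closedBall (0 : Pt n) 1) * volume (Ioc (0:ℝ) 1) := by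
                  rw [lintegral_const, Measure.restrict_apply_univ]
              _ < ⊤ := ENNReal.mul_lt_top measure_closedBall_lt_top (by simp)
          · calc ∫⁻ t in Ioi (1:ℝ), μ {z | t ≤ ‖z‖ ^ a}
                ≤ ∫⁻ t in Ioi (1:ℝ), ENNReal.ofReal (t ^ (a⁻¹ * n)) * mB := by
                  refine setLIntegral_mono (by fun_prop) fun t ht => ?_
                  have ht1 : (1:ℝ) < t := ht
                  have ht0 : (0:ℝ) < t := lt_trans one_pos ht1
                  have htr : 0 ≤ t ^ a⁻¹ := Real.rpow_nonneg ht0.le _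
                  calc μ {z | t ≤ ‖z‖ ^ a}
                      ≤ volume (Metric.closedBall (0 : Pt n) (t ^ a⁻¹)) := by
                        refine le_trans (measure_mono (hsub t ht0)) ?_
                        exact Measure.restrict_le_self _
                    _ = ENNReal.ofReal ((t ^ a⁻¹) ^ Module.finrank ℝ (Pt n)) * mB := by
                        rw [Measure.addHaar_closedBall _ _ htr]
                    _ = ENNReal.ofReal (t ^ (a⁻¹ * n)) * mB := by
                        rw [hfr, ← Real.rpow_natCast (t ^ a⁻¹) n,
                          ← Real.rpow_mul ht0.le]
              _ = (∫⁻ t in Ioi (1:ℝ), ENNReal.ofReal (t ^ (a⁻¹ * n))) * mB :=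
                  lintegral_mul_const' _ _ measure_ball_lt_top.ne
              _ < ⊤ := by
                  refine ENNReal.mul_lt_top ?_ measure_ball_lt_top
                  refine IntegrableOn.setLIntegral_lt_top ?_
                  refine integrableOn_Ioi_rpow_of_lt ?_ one_pos
                  have h1 : (n:ℝ) / a < -1 := by
                    rw [div_lt_iff_of_neg ha0]; linarith
                  calc a⁻¹ * n = (n:ℝ)/a := by ring
                    _ < -1 := h1

lemma riesz_translate (n : ℕ) (a : ℝ) (x : Pt n) :
    ∫⁻ y in Metric.closedBall x 1, ENNReal.ofReal (dist x y ^ a) =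
      ∫⁻ z in Metric.closedBall (0 : Pt n) 1, ENNReal.ofReal (‖z‖ ^ a) := by
  have hmp : MeasurePreserving (fun z : Pt n => x + z) volume volume :=
    measurePreserving_add_left volume x
  have hemb : MeasurableEmbedding (fun z : Pt n => x + z) :=
    (Homeomorph.addLeft x).measurableEmbedding
  have hpre : (fun z : Pt n => x + z) ⁻¹' Metric.closedBall x 1 =
      Metric.closedBall (0 : Pt n) 1 := by
    ext z
    simp [Metric.mem_closedBall, dist_eq_norm]
  calc ∫⁻ y in Metric.closedBall x 1, ENNReal.ofReal (dist x y ^ a)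
      = ∫⁻ z in (fun z : Pt n => x + z) ⁻¹' Metric.closedBall x 1,
          ENNReal.ofReal (dist x (x + z) ^ a) :=
        (hmp.setLIntegral_comp_preimage_emb hemb _ _).symm
    _ = ∫⁻ z in Metric.closedBall (0 : Pt n) 1, ENNReal.ofReal (‖z‖ ^ a) := by
        rw [hpre]
        refine setLIntegral_congr_fun measurableSet_closedBall ?_
        intro z hz
        simp only []
        rw [dist_eq_norm]
        simp


/-- `γ_{a,1}(x,y) = (1/2)(φ(x,y)-φ(y,x)) |x-y|^{-n-2s(x,y)}` for `|x-y| ≤ δ`, else `0`. -/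
def kerA1 {n : ℕ} (s φ : Pt n → Pt n → ℝ) (δ : ℝ≥0∞) (x y : Pt n) : ℝ :=
  if ENNReal.ofReal (dist x y) ≤ δ then
    (φ x y - φ y x) / 2 * dist x y ^ (-((n : ℝ) + 2 * s x y)) else 0

/-- **Near-field estimate for the coefficient asymmetry**: if `|φ(x,y)-φ(y,x)| ≤ L|x-y|^{s̄+ε}`,
then `sup_{x∈D} ∫_{y∈D, |x-y|≤δ̲, γ_s(x,y)≠0} γ_{a,1}(x,y)²/γ_s(x,y) dy < ∞`. -/
theorem kerA1_nearfield_bound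
    (n : ℕ) (hn : 1 ≤ n)
    (Ω : Set (Pt n)) (hΩo : IsOpen Ω) (hΩb : Bornology.IsBounded Ω) (hΩne : Ω.Nonempty)
    (δ : ℝ≥0∞) (hδ : 0 < δ)
    (s φ : Pt n → Pt n → ℝ)
    (hs_meas : Measurable (Function.uncurry s)) (hφ_meas : Measurable (Function.uncurry φ))
    (slo shi φlo φhi : ℝ) (hslo : 0 < slo) (hshi : shi < 1) (hφlo : 0 < φlo)
    (D : Set (Pt n)) (hD : D = Ω ∪ interactionDomain Ω δ)
    (hs_bd : ∀ x ∈ D, ∀ y ∈ D, slo ≤ s x y ∧ s x y ≤ shi)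
    (hφ_bd : ∀ x ∈ D, ∀ y ∈ D, φlo ≤ φ x y ∧ φ x y ≤ φhi)
    (hphiHolder : ∃ L : ℝ, 0 ≤ L ∧ ∃ ε : ℝ, 0 < ε ∧
        ∀ x ∈ D, ∀ y ∈ D, |φ x y - φ y x| ≤ L * dist x y ^ (shi + ε)) :
    (⨆ x ∈ D,
      ∫⁻ y in {y ∈ D |
          ENNReal.ofReal (dist x y) ≤ min δ 1 ∧ kerSym s φ δ x y ≠ 0},
        ENNReal.ofReal ((kerA1 s φ δ x y) ^ 2 / kerSym s φ δ x y)) < ⊤ := by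
  obtain ⟨L, hL, ε, hε, hHolder⟩ := hphiHolder
  have hn1 : (1:ℝ) ≤ (n:ℝ) := by exact_mod_cast hn
  set C : ℝ := L ^ 2 / (2 * φlo) with hC
  have hC0 : 0 ≤ C := by positivity
  set a : ℝ := 2 * ε - n with ha_def
  have ha : -(n:ℝ) < a := by simp only [ha_def]; linarith
  set K := ∫⁻ z in Metric.closedBall (0 : Pt n) 1, ENNReal.ofReal (‖z‖ ^ a) with hKdef
  have hK : K < ⊤ := riesz_finite n hn a ha
  refine lt_of_le_of_lt (b := ENNReal.ofReal C * K) (iSup₂_le fun x hx => ?_)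
    (ENNReal.mul_lt_top ENNReal.ofReal_lt_top hK)
  -- pointwise bound on the integration set
  have hpoint : ∀ y ∈ {y ∈ D |
      ENNReal.ofReal (dist x y) ≤ min δ 1 ∧ kerSym s φ δ x y ≠ 0},
      ENNReal.ofReal ((kerA1 s φ δ x y) ^ 2 / kerSym s φ δ x y) ≤
        ENNReal.ofReal C * ENNReal.ofReal (dist x y ^ a) := by
    intro y hy
    obtain ⟨hyD, hyd, hker⟩ := hy
    set d := dist x y with hddef
    have hd1 : d ≤ 1 := ENNReal.ofReal_le_one.1 (le_trans hyd (min_le_right _ _))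
    have hdδ : ENNReal.ofReal d ≤ δ := le_trans hyd (min_le_left _ _)
    obtain ⟨hs1, hs1'⟩ := hs_bd x hx y hyD
    obtain ⟨hs2, hs2'⟩ := hs_bd y hyD x hx
    obtain ⟨hφ1, hφ1'⟩ := hφ_bd x hx y hyD
    obtain ⟨hφ2, hφ2'⟩ := hφ_bd y hyD x hx
    have hexp1 : -((n:ℝ) + 2 * s x y) < 0 := by linarith
    have hexp2 : -((n:ℝ) + 2 * s y x) < 0 := by linarith
    have hd0 : d ≠ 0 := by
      intro h0
      apply hker
      have hdyx : dist y x = 0 := by rw [dist_comm]; exact h0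
      have hxyk : ker s φ δ x y = 0 := by
        rw [ker, ← hddef, h0, Real.zero_rpow hexp1.ne, mul_zero, ite_self]
      have hyxk : ker s φ δ y x = 0 := by
        rw [ker, hdyx, Real.zero_rpow hexp2.ne, mul_zero, ite_self]
      simp [kerSym, hxyk, hyxk]
    have hd : 0 < d := lt_of_le_of_ne dist_nonneg (Ne.symm hd0)
    set P : ℝ := d ^ (-((n:ℝ) + 2 * s x y)) with hPdef
    set P' : ℝ := d ^ (-((n:ℝ) + 2 * s y x)) with hP'def
    have hP : 0 < P := Real.rpow_pos_of_pos hd _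
    have hP' : 0 < P' := Real.rpow_pos_of_pos hd _
    have hkxy : ker s φ δ x y = φ x y * P := by
      rw [ker, ← hddef, if_pos hdδ]
    have hkyx : ker s φ δ y x = φ y x * P' := by
      rw [ker, dist_comm y x, ← hddef, if_pos hdδ]
    have hA1 : kerA1 s φ δ x y = (φ x y - φ y x) / 2 * P := by
      rw [kerA1, ← hddef, if_pos hdδ]
    set Q : ℝ := d ^ (shi + ε) with hQdef
    have hQ : 0 < Q := Real.rpow_pos_of_pos hd _
    have hsym_lb : φlo * P / 2 ≤ kerSym s φ δ x y := by
      rw [kerSym, hkxy, hkyx]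
      have h1 : φlo * P ≤ φ x y * P := mul_le_mul_of_nonneg_right hφ1 hP.le
      have h2 : 0 ≤ φ y x * P' := mul_nonneg (le_trans hφlo.le hφ2) hP'.le
      linarith
    have hsym_pos : 0 < kerSym s φ δ x y := lt_of_lt_of_le (by positivity) hsym_lb
    have habs : |kerA1 s φ δ x y| ≤ L * Q / 2 * P := by
      rw [hA1, abs_mul, abs_of_pos hP, abs_div]
      have h3 : |φ x y - φ y x| ≤ L * Q := hHolder x hx y hyD
      have h4 : |(2:ℝ)| = 2 := by norm_num
      rw [h4]
      exact mul_le_mul_of_nonneg_right (by linarith) hP.le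
    have hsq : kerA1 s φ δ x y ^ 2 ≤ (L * Q / 2 * P) ^ 2 := by
      rw [← sq_abs]
      exact pow_le_pow_left₀ (abs_nonneg _) habs 2
    have key : kerA1 s φ δ x y ^ 2 / kerSym s φ δ x y ≤ C * (Q ^ 2 * P) := by
      calc kerA1 s φ δ x y ^ 2 / kerSym s φ δ x y
          ≤ (L * Q / 2 * P) ^ 2 / (φlo * P / 2) :=
            div_le_div₀ (by positivity) hsq (by positivity) hsym_lb
        _ = C * (Q ^ 2 * P) := by
            rw [hC]; field_simp
    have hQ2 : Q ^ 2 * P = d ^ ((shi + ε) * 2 + -((n:ℝ) + 2 * s x y)) := by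
      rw [hQdef, hPdef, ← Real.rpow_natCast (d ^ (shi + ε)) 2,
        ← Real.rpow_mul hd.le, ← Real.rpow_add hd]
      norm_num
    have hle : d ^ ((shi + ε) * 2 + -((n:ℝ) + 2 * s x y)) ≤ d ^ a :=
      Real.rpow_le_rpow_of_exponent_ge hd hd1 (by simp only [ha_def]; linarith)
    have final : kerA1 s φ δ x y ^ 2 / kerSym s φ δ x y ≤ C * d ^ a := by
      refine le_trans key ?_
      rw [hQ2]
      exact mul_le_mul_of_nonneg_left hle hC0
    calc ENNReal.ofReal (kerA1 s φ δ x y ^ 2 / kerSym s φ δ x y)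
        ≤ ENNReal.ofReal (C * d ^ a) := ENNReal.ofReal_le_ofReal final
      _ = ENNReal.ofReal C * ENNReal.ofReal (d ^ a) := ENNReal.ofReal_mul hC0
  have hSsub : {y ∈ D | ENNReal.ofReal (dist x y) ≤ min δ 1 ∧ kerSym s φ δ x y ≠ 0}
      ⊆ Metric.closedBall x 1 := by
    intro y hy
    obtain ⟨_, hyd, _⟩ := hy
    have : dist x y ≤ 1 := ENNReal.ofReal_le_one.1 (le_trans hyd (min_le_right _ _))
    rw [Metric.mem_closedBall, dist_comm]
    exact this
  calc ∫⁻ y in {y ∈ D | ENNReal.ofReal (dist x y) ≤ min δ 1 ∧ kerSym s φ δ x y ≠ 0},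
        ENNReal.ofReal ((kerA1 s φ δ x y) ^ 2 / kerSym s φ δ x y)
      ≤ ∫⁻ y in {y ∈ D | ENNReal.ofReal (dist x y) ≤ min δ 1 ∧ kerSym s φ δ x y ≠ 0},
          ENNReal.ofReal C * ENNReal.ofReal (dist x y ^ a) :=
        setLIntegral_mono (by fun_prop) hpoint
    _ ≤ ∫⁻ y in Metric.closedBall x 1,
          ENNReal.ofReal C * ENNReal.ofReal (dist x y ^ a) := lintegral_mono_set hSsub
    _ = ENNReal.ofReal C * ∫⁻ y in Metric.closedBall x 1,
          ENNReal.ofReal (dist x y ^ a) := lintegral_const_mul' _ _ ENNReal.ofReal_ne_top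
    _ = ENNReal.ofReal C * K := by rw [riesz_translate n a x]


end
end

section
/- (Near-field estimate for the fractional-order asymmetry.) Define γ_{a,2}(x,y) := (1/2) φ(y,x) |x−y|^{−n} (|x−y|^{−2s(x,y)} − |x−y|^{−2s(y,x)}) for |x−y| ≤ δ and 0 otherwise, and β(r) := sup{|s(x,y)−s(y,x)| : x,y ∈ D, |x−y| ≤ r}. If ∫₀¹ (β(r)|log r|)² r^{−1−2s̄} dr < ∞, then sup_{x∈D} ∫_{{y ∈ D : |x−y| ≤ δ̲, γ_s(x,y) ≠ 0}} γ_{a,2}(x,y)² / γ_s(x,y) dy < ∞. -/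
open MeasureTheory ENNReal Set

noncomputable section

/-- `γ_{a,2}(x,y) = (1/2) φ(y,x) |x-y|^{-n} (|x-y|^{-2s(x,y)} - |x-y|^{-2s(y,x)})` for
`|x-y| ≤ δ`, else `0`. -/
def kerA2 {n : ℕ} (s φ : Pt n → Pt n → ℝ) (δ : ℝ≥0∞) (x y : Pt n) : ℝ :=
  if ENNReal.ofReal (dist x y) ≤ δ then
    φ y x / 2 * dist x y ^ (-(n : ℝ)) *
      (dist x y ^ (-(2 * s x y)) - dist x y ^ (-(2 * s y x))) else 0

/-! ### Auxiliary lemmas -/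

lemma one_sub_rpow_le_abs_log (r e : ℝ) (hr : 0 < r) (hr1 : r ≤ 1) :
    1 - r ^ e ≤ e * |Real.log r| := by
  have hl : Real.log r ≤ 0 := Real.log_nonpos hr.le hr1
  have h2 := Real.add_one_le_exp (Real.log r * e)
  have h3 : |Real.log r| = -Real.log r := abs_of_nonpos hl
  rw [Real.rpow_def_of_pos hr, h3]
  nlinarith

lemma abs_rpow_sub_rpow_le (r a b : ℝ) (hr : 0 < r) (hr1 : r ≤ 1) :
    |r ^ (-(2*a)) - r ^ (-(2*b))| ≤ r ^ (-(2*max a b)) * (2 * |a - b| * |Real.log r|) := by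
  wlog hab : a ≤ b generalizing a b
  · push_neg at hab
    rw [abs_sub_comm, max_comm, abs_sub_comm a b]
    exact this b a hab.le
  have hm : max a b = b := max_eq_right hab
  have h1 : r ^ (-(2*a)) = r ^ (-(2*b)) * r ^ (2*(b-a)) := by
    rw [← Real.rpow_add hr]; ring_nf
  have hle : r ^ (-(2*a)) ≤ r ^ (-(2*b)) :=
    Real.rpow_le_rpow_of_exponent_ge hr hr1 (by linarith)
  have hrb : (0:ℝ) < r ^ (-(2*b)) := Real.rpow_pos_of_pos hr _
  have h2 : 1 - r ^ (2*(b-a)) ≤ (2*(b-a)) * |Real.log r| :=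
    one_sub_rpow_le_abs_log r _ hr hr1
  have habs : |a - b| = b - a := by rw [abs_sub_comm]; exact abs_of_nonneg (by linarith)
  rw [hm, abs_of_nonpos (by linarith)]
  calc -(r ^ (-(2*a)) - r ^ (-(2*b))) = r ^ (-(2*b)) * (1 - r ^ (2*(b-a))) := by
        rw [h1]; try ring
    _ ≤ r ^ (-(2*b)) * ((2*(b-a)) * |Real.log r|) :=
        mul_le_mul_of_nonneg_left h2 hrb.le
    _ = r ^ (-(2*b)) * (2 * |a - b| * |Real.log r|) := by rw [habs]; try ring

lemma measurable_rpow_of_nonneg {α : Type*} [MeasurableSpace α] {f g : α → ℝ}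
    (hf : Measurable f) (hg : Measurable g) (h0 : ∀ x, 0 ≤ f x) :
    Measurable fun x => f x ^ g x := by
  have heq : (fun x => f x ^ g x) = fun x =>
      if f x = 0 then (if g x = 0 then 1 else 0) else Real.exp (Real.log (f x) * g x) := by
    funext x
    rcases eq_or_lt_of_le (h0 x) with h | h
    · have hfx : f x = 0 := h.symm
      rw [hfx, if_pos rfl]
      split_ifs with hgx
      · rw [hgx, Real.rpow_zero]
      · rw [Real.zero_rpow hgx]
    · rw [if_neg (ne_of_gt h), Real.rpow_def_of_pos h]
  rw [heq]
  refine Measurable.ite (hf (measurableSet_singleton 0)) ?_ ?_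
  · exact Measurable.ite (hg (measurableSet_singleton 0)) measurable_const measurable_const
  · exact Real.measurable_exp.comp ((Real.measurable_log.comp hf).mul hg)

open Metric in
lemma lintegral_norm_polar {E : Type*} [NormedAddCommGroup E] [NormedSpace ℝ E]
    [MeasurableSpace E] [BorelSpace E] [FiniteDimensional ℝ E] [Nontrivial E]
    (μ : Measure E) [μ.IsAddHaarMeasure] (f : ℝ → ℝ≥0∞) (hf : Measurable f) :
    ∫⁻ x, f ‖x‖ ∂μ = μ.toSphere Set.univ *
      ∫⁻ r in Set.Ioi (0:ℝ), ENNReal.ofReal (r ^ (Module.finrank ℝ E - 1)) * f r := by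
  have h0 : ∫⁻ x, f ‖x‖ ∂μ = ∫⁻ x : ({0}ᶜ : Set E), f ‖(x : E)‖ ∂(μ.comap (↑)) := by
    rw [lintegral_subtype_comap (measurableSet_singleton (0:E)).compl
        (fun a : E => f ‖a‖), restrict_compl_singleton]
  rw [h0]
  have hmp := Measure.measurePreserving_homeomorphUnitSphereProd μ
  have h1 : ∫⁻ x : ({0}ᶜ : Set E), f ‖(x:E)‖ ∂(μ.comap (↑))
      = ∫⁻ p : sphere (0:E) 1 × Set.Ioi (0:ℝ), f p.2
          ∂(μ.toSphere.prod (Measure.volumeIoiPow (Module.finrank ℝ E - 1))) := by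
    rw [← hmp.lintegral_comp (f := fun p : sphere (0:E) 1 × Set.Ioi (0:ℝ) => f p.2)
        (hf.comp (measurable_subtype_coe.comp measurable_snd))]
    exact lintegral_congr fun x => by simp
  rw [h1, lintegral_prod (fun p : ↥(Metric.sphere (0:E) 1) × ↥(Set.Ioi (0:ℝ)) => f ↑p.2)
    (show Measurable fun p : sphere (0:E) 1 × Set.Ioi (0:ℝ) => f ↑p.2 from
      hf.comp (measurable_subtype_coe.comp measurable_snd)).aemeasurable]
  have h2 : ∫⁻ y : Set.Ioi (0:ℝ), f ↑y ∂(Measure.volumeIoiPow (Module.finrank ℝ E - 1))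
      = ∫⁻ r in Set.Ioi (0:ℝ), ENNReal.ofReal (r ^ (Module.finrank ℝ E - 1)) * f r := by
    rw [Measure.volumeIoiPow, lintegral_withDensity_eq_lintegral_mul _
      ((measurable_subtype_coe.pow_const _).ennreal_ofReal)
      (show Measurable fun y : ↥(Set.Ioi (0:ℝ)) => f ↑y from hf.comp measurable_subtype_coe)]
    exact lintegral_subtype_comap measurableSet_Ioi
      (fun r => ENNReal.ofReal (r ^ (Module.finrank ℝ E - 1)) * f r)
  simp only [h2, lintegral_const]
  rw [mul_comm]

/-- **Near-field estimate for the fractional-order asymmetry**: if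
`∫₀¹ (β(r)|log r|)² r^{-1-2s̄} dr < ∞`, then
`sup_{x∈D} ∫_{y∈D, |x-y|≤δ̲, γ_s(x,y)≠0} γ_{a,2}(x,y)²/γ_s(x,y) dy < ∞`. -/
theorem kerA2_nearfield_bound
    (n : ℕ) (hn : 1 ≤ n)
    (Ω : Set (Pt n)) (hΩo : IsOpen Ω) (hΩb : Bornology.IsBounded Ω) (hΩne : Ω.Nonempty)
    (δ : ℝ≥0∞) (hδ : 0 < δ)
    (s φ : Pt n → Pt n → ℝ)
    (hs_meas : Measurable (Function.uncurry s)) (hφ_meas : Measurable (Function.uncurry φ))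
    (slo shi φlo φhi : ℝ) (hslo : 0 < slo) (hshi : shi < 1) (hφlo : 0 < φlo)
    (D : Set (Pt n)) (hD : D = Ω ∪ interactionDomain Ω δ)
    (hs_bd : ∀ x ∈ D, ∀ y ∈ D, slo ≤ s x y ∧ s x y ≤ shi)
    (hφ_bd : ∀ x ∈ D, ∀ y ∈ D, φlo ≤ φ x y ∧ φ x y ≤ φhi)
    (hbeta : ∫⁻ r in Set.Ioo (0:ℝ) 1,
        ENNReal.ofReal ((betaFn s D r * |Real.log r|) ^ 2 * r ^ (-1 - 2 * shi)) < ⊤) :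
    (⨆ x ∈ D,
      ∫⁻ y in {y ∈ D |
          ENNReal.ofReal (dist x y) ≤ min δ 1 ∧ kerSym s φ δ x y ≠ 0},
        ENNReal.ofReal ((kerA2 s φ δ x y) ^ 2 / kerSym s φ δ x y)) < ⊤ := by
  classical
  obtain ⟨x0, hx0Ω⟩ := hΩne
  have hx0D : x0 ∈ D := by rw [hD]; exact Or.inl hx0Ω
  have hss := hs_bd x0 hx0D x0 hx0D
  have hsls : slo ≤ shi := le_trans hss.1 hss.2
  have hφφ := hφ_bd x0 hx0D x0 hx0D
  have hφhi : 0 < φhi := lt_of_lt_of_le hφlo (le_trans hφφ.1 hφφ.2)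
  have hn0 : (0:ℝ) < (n:ℝ) := by exact_mod_cast hn
  -- facts about betaFn
  have hbdd : ∀ r : ℝ, BddAbove {t | ∃ x ∈ D, ∃ y ∈ D, dist x y ≤ r ∧ t = |s x y - s y x|} := by
    intro r
    refine ⟨shi - slo, ?_⟩
    rintro t ⟨x, hx, y, hy, -, rfl⟩
    have h1 := hs_bd x hx y hy
    have h2 := hs_bd y hy x hx
    rw [abs_sub_le_iff]
    constructor <;> linarith
  have hβ_ge : ∀ x ∈ D, ∀ y ∈ D, |s x y - s y x| ≤ betaFn s D (dist x y) := by
    intro x hx y hy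
    exact le_csSup (hbdd _) ⟨x, hx, y, hy, le_rfl, rfl⟩
  have hβ0 : ∀ r : ℝ, 0 ≤ betaFn s D r := by
    intro r
    rcases le_or_gt 0 r with h | h
    · have hmem : (0:ℝ) ∈ {t | ∃ x ∈ D, ∃ y ∈ D, dist x y ≤ r ∧ t = |s x y - s y x|} :=
        ⟨x0, hx0D, x0, hx0D, by simpa using h, by simp⟩
      exact le_csSup (hbdd r) hmem
    · have hemp : {t | ∃ x ∈ D, ∃ y ∈ D, dist x y ≤ r ∧ t = |s x y - s y x|} = ∅ := by
        rw [eq_empty_iff_forall_notMem]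
        intro t ht
        obtain ⟨x, hx, y, hy, hd, rfl⟩ := ht
        exact absurd (le_trans dist_nonneg hd) (not_le.2 h)
      rw [betaFn, hemp, Real.sSup_empty]
  have hβmono : Monotone (betaFn s D) := by
    intro r1 r2 h12
    by_cases hne : {t | ∃ x ∈ D, ∃ y ∈ D, dist x y ≤ r1 ∧ t = |s x y - s y x|}.Nonempty
    · refine csSup_le_csSup (hbdd r2) hne ?_
      rintro t ⟨x, hx, y, hy, hd, rfl⟩
      exact ⟨x, hx, y, hy, hd.trans h12, rfl⟩
    · rw [not_nonempty_iff_eq_empty] at hne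
      have : betaFn s D r1 = 0 := by rw [betaFn, hne, Real.sSup_empty]
      rw [this]
      exact hβ0 r2
  have hβmeas : Measurable (betaFn s D) := hβmono.measurable
  -- the dominating radial function
  set K : ℝ := 2 * φhi ^ 2 / φlo with hKdef
  have hK0 : 0 ≤ K := by positivity
  set f : ℝ → ℝ≥0∞ := fun r => if r ∈ Set.Ioc (0:ℝ) 1 then
      ENNReal.ofReal (K * (betaFn s D r * |Real.log r|) ^ 2 * |r| ^ (-((n:ℝ) + 2 * shi)))
    else 0 with hfdef
  have hfmeas : Measurable f := by
    refine Measurable.ite measurableSet_Ioc ?_ measurable_const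
    refine Measurable.ennreal_ofReal ?_
    refine Measurable.mul ?_ ?_
    · exact measurable_const.mul ((hβmeas.mul Real.measurable_log.abs).pow_const 2)
    · exact measurable_rpow_of_nonneg measurable_abs measurable_const (fun x => abs_nonneg x)
  -- the key pointwise estimate
  have key : ∀ x ∈ D, ∀ y ∈ D, ENNReal.ofReal (dist x y) ≤ min δ 1 →
      kerSym s φ δ x y ≠ 0 →
      ENNReal.ofReal (kerA2 s φ δ x y ^ 2 / kerSym s φ δ x y) ≤ f (dist x y) := by
    intro x hx y hy hd hne
    have hr0 : (0:ℝ) ≤ dist x y := dist_nonneg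
    have hrδ : ENNReal.ofReal (dist x y) ≤ δ := hd.trans (min_le_left _ _)
    have hr1 : dist x y ≤ 1 := ENNReal.ofReal_le_one.mp (hd.trans (min_le_right δ 1))
    have ha := hs_bd x hx y hy
    have hb := hs_bd y hy x hx
    have hφa := hφ_bd x hx y hy
    have hφb := hφ_bd y hy x hx
    have hrpos : 0 < dist x y := by
      rcases hr0.lt_or_eq with h | h
      · exact h
      · exfalso
        apply hne
        have hxy : dist x y = 0 := h.symm
        have hyx : dist y x = 0 := by rw [dist_comm]; exact hxy
        have e1 : -((n:ℝ) + 2 * s x y) ≠ 0 :=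
          neg_ne_zero.mpr (ne_of_gt (by nlinarith [ha.1]))
        have e2 : -((n:ℝ) + 2 * s y x) ≠ 0 :=
          neg_ne_zero.mpr (ne_of_gt (by nlinarith [hb.1]))
        unfold kerSym ker
        rw [hxy, hyx, Real.zero_rpow e1, Real.zero_rpow e2]
        split_ifs <;> simp
    have hdyx : dist y x = dist x y := dist_comm y x
    have hmshi : max (s x y) (s y x) ≤ shi := max_le ha.2 hb.2
    set R : ℝ := dist x y ^ (-((n:ℝ) + 2 * max (s x y) (s y x))) with hRdef
    set Rh : ℝ := dist x y ^ (-((n:ℝ) + 2 * shi)) with hRhdef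
    have hRpos : 0 < R := Real.rpow_pos_of_pos hrpos _
    have hRhpos : 0 < Rh := Real.rpow_pos_of_pos hrpos _
    have hRRh : R ≤ Rh :=
      Real.rpow_le_rpow_of_exponent_ge hrpos hr1 (by linarith)
    have hsym_eq : kerSym s φ δ x y =
        (φ x y * dist x y ^ (-((n:ℝ) + 2 * s x y))
          + φ y x * dist x y ^ (-((n:ℝ) + 2 * s y x))) / 2 := by
      unfold kerSym ker
      rw [hdyx]
      simp only [if_pos hrδ]
    have hA2_eq : kerA2 s φ δ x y = φ y x / 2 * dist x y ^ (-(n:ℝ)) *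
        (dist x y ^ (-(2 * s x y)) - dist x y ^ (-(2 * s y x))) := by
      unfold kerA2
      rw [if_pos hrδ]
    -- lower bound for the symmetric kernel
    have hsymlo : φlo / 2 * R ≤ kerSym s φ δ x y := by
      rw [hsym_eq]
      have ht1 : (0:ℝ) ≤ φ x y * dist x y ^ (-((n:ℝ) + 2 * s x y)) :=
        mul_nonneg (le_trans hφlo.le hφa.1) (Real.rpow_nonneg hr0 _)
      have ht2 : (0:ℝ) ≤ φ y x * dist x y ^ (-((n:ℝ) + 2 * s y x)) :=
        mul_nonneg (le_trans hφlo.le hφb.1) (Real.rpow_nonneg hr0 _)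
      rcases le_total (s y x) (s x y) with hab | hab
      · have hm : max (s x y) (s y x) = s x y := max_eq_left hab
        have hR1 : φlo * R ≤ φ x y * dist x y ^ (-((n:ℝ) + 2 * s x y)) := by
          rw [hRdef, hm]
          exact mul_le_mul_of_nonneg_right hφa.1 (Real.rpow_nonneg hr0 _)
        linarith
      · have hm : max (s x y) (s y x) = s y x := max_eq_right hab
        have hR1 : φlo * R ≤ φ y x * dist x y ^ (-((n:ℝ) + 2 * s y x)) := by
          rw [hRdef, hm]
          exact mul_le_mul_of_nonneg_right hφb.1 (Real.rpow_nonneg hr0 _)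
        linarith
    have hsympos : 0 < kerSym s φ δ x y :=
      lt_of_lt_of_le (mul_pos (by linarith) hRpos) hsymlo
    -- upper bound for |kerA2|
    have hdiff := abs_rpow_sub_rpow_le (dist x y) (s x y) (s y x) hrpos hr1
    have hβr : |s x y - s y x| ≤ betaFn s D (dist x y) := hβ_ge x hx y hy
    have hL0 : (0:ℝ) ≤ |Real.log (dist x y)| := abs_nonneg _
    have hrn : (0:ℝ) < dist x y ^ (-(n:ℝ)) := Real.rpow_pos_of_pos hrpos _
    have hr2m : (0:ℝ) ≤ dist x y ^ (-(2 * max (s x y) (s y x))) := Real.rpow_nonneg hr0 _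
    have hφyx0 : (0:ℝ) ≤ φ y x := le_trans hφlo.le hφb.1
    have hRsplit : dist x y ^ (-(n:ℝ)) * dist x y ^ (-(2 * max (s x y) (s y x))) = R := by
      rw [hRdef, ← Real.rpow_add hrpos]
      congr 1
      ring
    have habsA2 : |kerA2 s φ δ x y| ≤
        φhi * (betaFn s D (dist x y) * |Real.log (dist x y)|) * R := by
      rw [hA2_eq, abs_mul, abs_mul,
        abs_of_nonneg (div_nonneg hφyx0 (by norm_num : (0:ℝ) ≤ 2)),
        abs_of_nonneg (Real.rpow_nonneg hr0 _)]
      calc φ y x / 2 * dist x y ^ (-(n:ℝ)) *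
            |dist x y ^ (-(2 * s x y)) - dist x y ^ (-(2 * s y x))|
          ≤ φhi / 2 * dist x y ^ (-(n:ℝ)) *
            (dist x y ^ (-(2 * max (s x y) (s y x))) *
              (2 * |s x y - s y x| * |Real.log (dist x y)|)) := by
            refine mul_le_mul ?_ hdiff (abs_nonneg _) ?_
            · exact mul_le_mul_of_nonneg_right (by linarith [hφb.2]) hrn.le
            · exact mul_nonneg (by linarith) hrn.le
        _ = φhi * (|s x y - s y x| * |Real.log (dist x y)|) *
              (dist x y ^ (-(n:ℝ)) * dist x y ^ (-(2 * max (s x y) (s y x)))) := by ring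
        _ = φhi * (|s x y - s y x| * |Real.log (dist x y)|) * R := by rw [hRsplit]
        _ ≤ φhi * (betaFn s D (dist x y) * |Real.log (dist x y)|) * R := by
            refine mul_le_mul_of_nonneg_right ?_ hRpos.le
            exact mul_le_mul_of_nonneg_left (mul_le_mul_of_nonneg_right hβr hL0) hφhi.le
    -- combine
    have hfinal : kerA2 s φ δ x y ^ 2 / kerSym s φ δ x y ≤
        K * (betaFn s D (dist x y) * |Real.log (dist x y)|) ^ 2 * Rh := by
      rw [div_le_iff₀ hsympos]
      have hBL0 : (0:ℝ) ≤ betaFn s D (dist x y) * |Real.log (dist x y)| :=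
        mul_nonneg (hβ0 _) hL0
      calc kerA2 s φ δ x y ^ 2 = |kerA2 s φ δ x y| ^ 2 := (sq_abs _).symm
        _ ≤ (φhi * (betaFn s D (dist x y) * |Real.log (dist x y)|) * R) ^ 2 :=
            pow_le_pow_left₀ (abs_nonneg _) habsA2 2
        _ = φhi ^ 2 * (betaFn s D (dist x y) * |Real.log (dist x y)|) ^ 2 * (R * R) := by ring
        _ ≤ φhi ^ 2 * (betaFn s D (dist x y) * |Real.log (dist x y)|) ^ 2 * (Rh * R) := by
            refine mul_le_mul_of_nonneg_left (mul_le_mul_of_nonneg_right hRRh hRpos.le) ?_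
            positivity
        _ = (K * (betaFn s D (dist x y) * |Real.log (dist x y)|) ^ 2 * Rh) *
              (φlo / 2 * R) := by
            rw [hKdef]
            field_simp
        _ ≤ (K * (betaFn s D (dist x y) * |Real.log (dist x y)|) ^ 2 * Rh) *
              kerSym s φ δ x y := by
            refine mul_le_mul_of_nonneg_left hsymlo ?_
            exact mul_nonneg (mul_nonneg hK0 (sq_nonneg _)) hRhpos.le
    have hmem : dist x y ∈ Set.Ioc (0:ℝ) 1 := ⟨hrpos, hr1⟩
    rw [hfdef]
    simp only [if_pos hmem]
    rw [abs_of_pos hrpos]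
    exact ENNReal.ofReal_le_ofReal (by rw [← hRhdef]; exact hfinal)
  -- per-point integral bound
  have hmain : ∀ x ∈ D,
      (∫⁻ y in {y ∈ D | ENNReal.ofReal (dist x y) ≤ min δ 1 ∧ kerSym s φ δ x y ≠ 0},
        ENNReal.ofReal ((kerA2 s φ δ x y) ^ 2 / kerSym s φ δ x y))
      ≤ ∫⁻ z : Pt n, f ‖z‖ := by
    intro x hx
    have hmd : Measurable fun y : Pt n => dist x y := measurable_const.dist measurable_id
    have hmd' : Measurable fun y : Pt n => dist y x := measurable_id.dist measurable_const
    have hsxy : Measurable fun y : Pt n => s x y := hs_meas.comp measurable_prodMk_left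
    have hsyx : Measurable fun y : Pt n => s y x := hs_meas.comp measurable_prodMk_right
    have hφxy : Measurable fun y : Pt n => φ x y := hφ_meas.comp measurable_prodMk_left
    have hφyx : Measurable fun y : Pt n => φ y x := hφ_meas.comp measurable_prodMk_right
    have hcond : MeasurableSet {y : Pt n | ENNReal.ofReal (dist x y) ≤ δ} :=
      measurableSet_le hmd.ennreal_ofReal measurable_const
    have hcond' : MeasurableSet {y : Pt n | ENNReal.ofReal (dist y x) ≤ δ} :=
      measurableSet_le hmd'.ennreal_ofReal measurable_const
    have hker1 : Measurable fun y : Pt n => ker s φ δ x y := by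
      unfold ker
      refine Measurable.ite hcond ?_ measurable_const
      exact hφxy.mul (measurable_rpow_of_nonneg hmd
        ((measurable_const.add (hsxy.const_mul 2)).neg) (fun y => dist_nonneg))
    have hker2 : Measurable fun y : Pt n => ker s φ δ y x := by
      unfold ker
      refine Measurable.ite hcond' ?_ measurable_const
      exact hφyx.mul (measurable_rpow_of_nonneg hmd'
        ((measurable_const.add (hsyx.const_mul 2)).neg) (fun y => dist_nonneg))
    have hsymm : Measurable fun y : Pt n => kerSym s φ δ x y := by
      unfold kerSym
      exact (hker1.add hker2).div_const 2
    have hA2m : Measurable fun y : Pt n => kerA2 s φ δ x y := by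
      unfold kerA2
      refine Measurable.ite hcond ?_ measurable_const
      refine Measurable.mul ?_ ?_
      · exact (hφyx.div_const 2).mul
          (measurable_rpow_of_nonneg hmd measurable_const (fun y => dist_nonneg))
      · exact (measurable_rpow_of_nonneg hmd ((hsxy.const_mul 2).neg)
          (fun y => dist_nonneg)).sub
          (measurable_rpow_of_nonneg hmd ((hsyx.const_mul 2).neg) (fun y => dist_nonneg))
    have hhm : Measurable fun y : Pt n =>
        ENNReal.ofReal (kerA2 s φ δ x y ^ 2 / kerSym s φ δ x y) :=
      ((hA2m.pow_const 2).div hsymm).ennreal_ofReal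
    have hgm : Measurable fun y : Pt n => f (dist x y) := hfmeas.comp hmd
    have step1 : (∫⁻ y in {y ∈ D | ENNReal.ofReal (dist x y) ≤ min δ 1 ∧ kerSym s φ δ x y ≠ 0},
        ENNReal.ofReal ((kerA2 s φ δ x y) ^ 2 / kerSym s φ δ x y))
        ≤ ∫⁻ y in {y ∈ D | ENNReal.ofReal (dist x y) ≤ min δ 1 ∧ kerSym s φ δ x y ≠ 0},
            f (dist x y) := by
      refine lintegral_mono_ae ?_
      have hbadm : MeasurableSet {y : Pt n |
          ¬ ENNReal.ofReal (kerA2 s φ δ x y ^ 2 / kerSym s φ δ x y) ≤ f (dist x y)} := by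
        simp only [not_le]
        exact measurableSet_lt hgm hhm
      rw [ae_iff, Measure.restrict_apply hbadm]
      have hempty : {y : Pt n |
          ¬ ENNReal.ofReal (kerA2 s φ δ x y ^ 2 / kerSym s φ δ x y) ≤ f (dist x y)} ∩
          {y ∈ D | ENNReal.ofReal (dist x y) ≤ min δ 1 ∧ kerSym s φ δ x y ≠ 0} = ∅ := by
        rw [eq_empty_iff_forall_notMem]
        intro y hy
        obtain ⟨hbad, hyD, hdle, hnz⟩ := hy
        exact hbad (key x hx y hyD hdle hnz)
      rw [hempty, measure_empty]
    have step2 : (∫⁻ y in {y ∈ D | ENNReal.ofReal (dist x y) ≤ min δ 1 ∧ kerSym s φ δ x y ≠ 0},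
        f (dist x y)) ≤ ∫⁻ y, f (dist x y) := setLIntegral_le_lintegral _ _
    have step3 : (∫⁻ y, f (dist x y)) = ∫⁻ z : Pt n, f ‖z‖ := by
      have hfun : (fun y : Pt n => f (dist x y)) = fun y : Pt n => f ‖(-x) + y‖ :=
        funext fun y => by rw [neg_add_eq_sub, ← dist_eq_norm, dist_comm]
      rw [hfun]
      exact lintegral_add_left_eq_self (fun z : Pt n => f ‖z‖) (-x)
    exact le_trans step1 (le_trans step2 (le_of_eq step3))
  -- finiteness of the dominating integral
  haveI : Nontrivial (Pt n) := by
    refine Module.nontrivial_of_finrank_pos (R := ℝ) (M := Pt n) ?_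
    rw [finrank_euclideanSpace_fin]
    omega
  have hfr : Module.finrank ℝ (Pt n) = n := finrank_euclideanSpace_fin
  have hfin : (∫⁻ z : Pt n, f ‖z‖) < ⊤ := by
    rw [lintegral_norm_polar volume f hfmeas, hfr]
    refine ENNReal.mul_lt_top (measure_lt_top _ _) ?_
    have hJle : (∫⁻ r in Set.Ioi (0:ℝ), ENNReal.ofReal (r ^ (n - 1)) * f r)
        ≤ ∫⁻ r in Set.Ioi (0:ℝ), (Set.Ioo (0:ℝ) 1).indicator (fun r =>
            ENNReal.ofReal K *
              ENNReal.ofReal ((betaFn s D r * |Real.log r|) ^ 2 * r ^ (-1 - 2 * shi))) r := by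
      refine lintegral_mono fun r => ?_
      by_cases hr : r ∈ Set.Ioc (0:ℝ) 1
      · rcases hr.2.eq_or_lt with h1 | h1
        · subst h1
          simp [hfdef, Real.log_one]
        · have hmem : r ∈ Set.Ioo (0:ℝ) 1 := ⟨hr.1, h1⟩
          rw [Set.indicator_of_mem hmem, hfdef]
          simp only [if_pos hr]
          rw [abs_of_pos hr.1]
          rw [← ENNReal.ofReal_mul (pow_nonneg hr.1.le (n-1)),
            ← ENNReal.ofReal_mul hK0]
          refine ENNReal.ofReal_le_ofReal (le_of_eq ?_)
          have hpow : (r:ℝ) ^ (n - 1 : ℕ) = r ^ ((n:ℝ) - 1) := by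
            rw [← Real.rpow_natCast r (n - 1), Nat.cast_sub hn, Nat.cast_one]
          rw [hpow]
          calc r ^ ((n:ℝ) - 1) *
                (K * (betaFn s D r * |Real.log r|) ^ 2 * r ^ (-((n:ℝ) + 2 * shi)))
              = K * (betaFn s D r * |Real.log r|) ^ 2 *
                  (r ^ ((n:ℝ) - 1) * r ^ (-((n:ℝ) + 2 * shi))) := by ring
            _ = K * ((betaFn s D r * |Real.log r|) ^ 2 * r ^ (-1 - 2 * shi)) := by
                rw [← Real.rpow_add hr.1,
                  show (n:ℝ) - 1 + -((n:ℝ) + 2 * shi) = -1 - 2 * shi by ring]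
                ring
      · rw [hfdef]
        simp only [if_neg hr, mul_zero]
        exact zero_le'
    have hJ2 : (∫⁻ r in Set.Ioi (0:ℝ), (Set.Ioo (0:ℝ) 1).indicator (fun r =>
            ENNReal.ofReal K *
              ENNReal.ofReal ((betaFn s D r * |Real.log r|) ^ 2 * r ^ (-1 - 2 * shi))) r)
        ≤ ∫⁻ r, (Set.Ioo (0:ℝ) 1).indicator (fun r =>
            ENNReal.ofReal K *
              ENNReal.ofReal ((betaFn s D r * |Real.log r|) ^ 2 * r ^ (-1 - 2 * shi))) r :=
      setLIntegral_le_lintegral _ _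
    have hJ3 : (∫⁻ r, (Set.Ioo (0:ℝ) 1).indicator (fun r =>
            ENNReal.ofReal K *
              ENNReal.ofReal ((betaFn s D r * |Real.log r|) ^ 2 * r ^ (-1 - 2 * shi))) r)
        = ∫⁻ r in Set.Ioo (0:ℝ) 1, ENNReal.ofReal K *
            ENNReal.ofReal ((betaFn s D r * |Real.log r|) ^ 2 * r ^ (-1 - 2 * shi)) :=
      lintegral_indicator measurableSet_Ioo _
    have hJ4 : (∫⁻ r in Set.Ioo (0:ℝ) 1, ENNReal.ofReal K *
            ENNReal.ofReal ((betaFn s D r * |Real.log r|) ^ 2 * r ^ (-1 - 2 * shi)))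
        = ENNReal.ofReal K * ∫⁻ r in Set.Ioo (0:ℝ) 1,
            ENNReal.ofReal ((betaFn s D r * |Real.log r|) ^ 2 * r ^ (-1 - 2 * shi)) :=
      lintegral_const_mul' _ _ ENNReal.ofReal_ne_top
    calc (∫⁻ r in Set.Ioi (0:ℝ), ENNReal.ofReal (r ^ (n - 1)) * f r)
        ≤ ENNReal.ofReal K * ∫⁻ r in Set.Ioo (0:ℝ) 1,
            ENNReal.ofReal ((betaFn s D r * |Real.log r|) ^ 2 * r ^ (-1 - 2 * shi)) := by
          rw [← hJ4, ← hJ3]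
          exact le_trans hJle hJ2
      _ < ⊤ := ENNReal.mul_lt_top ENNReal.ofReal_lt_top hbeta
  exact lt_of_le_of_lt (iSup₂_le hmain) hfin

end
end
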